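/- arXiv:2512.03396 — 5 statements merged into one kernel-verified Lean document; each statement's English description precedes it below -/
import Mathlib

section
/- Let ν be a continuous capacity on a measurable space (Ω, F). Then ν is exact if and only if the following holds: for every n ≥ 1, all bounded measurable X₁, …, Xₙ : Ω → ℝ, all λ₁, …, λₙ ∈ [0,1] with λ₁ + ⋯ + λₙ = 1 such that ∑ₖ λₖXₖ = x·1_A + y·1_{Aᶜ} for some measurable A and some x, y ∈ ℝ, and every α ∈ (0,1]: ∫₀^α q_ν(∑ₖ λₖXₖ, β) dβ ≥ ∑ₖ λₖ ∫₀^α q_ν(Xₖ, β) dβ. (This integrated-quantile inequality is, for compactly supported distributions, the paper's second-order stochastic dominance condition 𝔇_ν(∑ₖ λₖXₖ) ≥_ssd ⨁ₖ λₖ ⊗ 𝔇_ν(Xₖ), and exactness of ν is equivalent to 𝔇_ν = 𝔇_{𝔈(ν)}.) -/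
open MeasureTheory Filter Topology
open Set
open scoped Classical ENNReal Pointwise

noncomputable section

/-- Bounded measurable real-valued functions with respect to the σ-algebra `m`. -/
def BddMeas {Ω : Type*} (m : MeasurableSpace Ω) (X : Ω → ℝ) : Prop :=
  @Measurable Ω ℝ m _ X ∧ ∃ M : ℝ, ∀ ω, |X ω| ≤ M

/-- A capacity on a measurable space. -/
def IsCapacity {Ω : Type*} (m : MeasurableSpace Ω) (ν : Set Ω → ℝ) : Prop :=
  ν ∅ = 0 ∧ ν Set.univ = 1 ∧
    ∀ A B : Set Ω, @MeasurableSet Ω m A → @MeasurableSet Ω m B → A ⊆ B → ν A ≤ ν B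

/-- A continuous capacity: continuous along increasing and decreasing sequences. -/
def IsContinuousCapacity {Ω : Type*} (m : MeasurableSpace Ω) (ν : Set Ω → ℝ) : Prop :=
  IsCapacity m ν ∧
    (∀ A : ℕ → Set Ω, (∀ n, @MeasurableSet Ω m (A n)) → Monotone A →
      Filter.Tendsto (fun n => ν (A n)) Filter.atTop (nhds (ν (⋃ n, A n)))) ∧
    (∀ A : ℕ → Set Ω, (∀ n, @MeasurableSet Ω m (A n)) → Antitone A →
      Filter.Tendsto (fun n => ν (A n)) Filter.atTop (nhds (ν (⋂ n, A n))))

/-- Supermodularity of a capacity. -/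
def Supermodular {Ω : Type*} (m : MeasurableSpace Ω) (ν : Set Ω → ℝ) : Prop :=
  ∀ A B : Set Ω, @MeasurableSet Ω m A → @MeasurableSet Ω m B →
    ν A + ν B ≤ ν (A ∪ B) + ν (A ∩ B)

/-- A distribution: a compactly supported Borel probability measure on ℝ. -/
def IsDistribution (Q : Measure ℝ) : Prop :=
  IsProbabilityMeasure Q ∧ ∃ a b : ℝ, Q (Set.Icc a b) = 1

/-- `FSDle P Q` means `Q ≥_fsd P` (first-order stochastic dominance). -/
def FSDle (P Q : Measure ℝ) : Prop := ∀ x : ℝ, P (Set.Ioi x) ≤ Q (Set.Ioi x)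

/-- Weak convergence of a sequence of Borel measures on ℝ. -/
def WeakConv (Qn : ℕ → Measure ℝ) (Q : Measure ℝ) : Prop :=
  ∀ f : BoundedContinuousFunction ℝ ℝ,
    Filter.Tendsto (fun n => ∫ x, f x ∂(Qn n)) Filter.atTop (nhds (∫ x, f x ∂Q))

/-- A statistic: strictly fsd-monotone and compactly continuous functional on distributions. -/
def IsStatistic (γ : Measure ℝ → ℝ) : Prop :=
  (∀ Q P : Measure ℝ, IsDistribution Q → IsDistribution P → FSDle P Q → γ P ≤ γ Q) ∧
  (∀ Q P : Measure ℝ, IsDistribution Q → IsDistribution P → FSDle P Q → Q ≠ P → γ P < γ Q) ∧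
  (∀ (Qn : ℕ → Measure ℝ) (Q : Measure ℝ), (∀ n, IsDistribution (Qn n)) → IsDistribution Q →
    (∃ a b : ℝ, ∀ n, Qn n (Set.Icc a b) = 1) → WeakConv Qn Q →
    Filter.Tendsto (fun n => γ (Qn n)) Filter.atTop (nhds (γ Q)))

/-- A certainty-equivalent statistic. -/
def IsCEStatistic (γ : Measure ℝ → ℝ) : Prop :=
  IsStatistic γ ∧ ∀ c : ℝ, γ (MeasureTheory.Measure.dirac c) = c

/-- `D` is the Choquet act-to-distribution mapping associated with the capacity `ν`. -/
def IsChoquetATD {Ω : Type*} (m : MeasurableSpace Ω) (ν : Set Ω → ℝ)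
    (D : (Ω → ℝ) → Measure ℝ) : Prop :=
  ∀ X : Ω → ℝ, BddMeas m X →
    IsDistribution (D X) ∧ ∀ x : ℝ, (D X (Set.Ioi x)).toReal = ν {ω | x < X ω}

/-- The ν-quantile of `X` at level `α`. -/
def capQuantile {Ω : Type*} (ν : Set Ω → ℝ) (X : Ω → ℝ) (α : ℝ) : ℝ :=
  sInf {x : ℝ | ν {ω | x < X ω} < 1 - α}

/-- The quantile function of a distribution. -/
def distQuantile (Q : Measure ℝ) (α : ℝ) : ℝ :=
  sInf {x : ℝ | (Q (Set.Ioi x)).toReal < 1 - α}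

/-- Comonotonic pairs of functions. -/
def Comonotonic {Ω : Type*} (X Y : Ω → ℝ) : Prop :=
  ∀ s s' : Ω, 0 ≤ (X s - X s') * (Y s - Y s')

/-- Real-valued indicator function of a set. -/
def ind {Ω : Type*} (A : Set Ω) : Ω → ℝ := A.indicator fun _ => 1

/-- Atomlessness of `P` in the sense of the paper. -/
def AtomlessOn {Ω : Type*} (G : MeasurableSpace Ω) (P : @Measure Ω G) : Prop :=
  ∀ A : Set Ω, @MeasurableSet Ω G A → ∀ r : ENNReal, r ≤ P A →
    ∃ B : Set Ω, @MeasurableSet Ω G B ∧ B ⊆ A ∧ P B = r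

/-- A capacity is risk conforming if it coincides with `P` on `G`. -/
def RiskConforming {Ω : Type*} (G : MeasurableSpace Ω) (P : @Measure Ω G)
    (ν : Set Ω → ℝ) : Prop :=
  ∀ A : Set Ω, @MeasurableSet Ω G A → ν A = (P A).toReal

/-- A preference relation: a total preorder on the bounded `m`-measurable functions. -/
def TotalPreorderOn {Ω : Type*} (m : MeasurableSpace Ω)
    (pref : (Ω → ℝ) → (Ω → ℝ) → Prop) : Prop :=
  (∀ X Y, BddMeas m X → BddMeas m Y → pref X Y ∨ pref Y X) ∧
  (∀ X Y Z, BddMeas m X → BddMeas m Y → BddMeas m Z → pref X Y → pref Y Z → pref X Z)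

/-- Axiom (M): monotonicity. -/
def AxiomM {Ω : Type*} (m : MeasurableSpace Ω) (pref : (Ω → ℝ) → (Ω → ℝ) → Prop) : Prop :=
  ∀ X Y, BddMeas m X → BddMeas m Y → (∀ ω, Y ω ≤ X ω) → pref X Y

/-- Axiom (RC): risk conformity. -/
def AxiomRC {Ω : Type*} (G : MeasurableSpace Ω) (P : @Measure Ω G)
    (pref : (Ω → ℝ) → (Ω → ℝ) → Prop) : Prop :=
  ∀ X Y, BddMeas G X → BddMeas G Y →
    (∀ x : ℝ, P {ω | x < X ω} = P {ω | x < Y ω}) → pref X Y ∧ pref Y X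

/-- Axiom (SRM): strict risk monotonicity. -/
def AxiomSRM {Ω : Type*} (G : MeasurableSpace Ω) (P : @Measure Ω G)
    (pref : (Ω → ℝ) → (Ω → ℝ) → Prop) : Prop :=
  ∀ X Y, BddMeas G X → BddMeas G Y →
    P {ω | Y ω ≤ X ω} = 1 → 0 < P {ω | Y ω < X ω} → pref X Y ∧ ¬ pref Y X

/-- Axiom (C): continuity (B-closedness of upper and lower contour sets). -/
def AxiomC {Ω : Type*} (m : MeasurableSpace Ω) (pref : (Ω → ℝ) → (Ω → ℝ) → Prop) : Prop :=
  ∀ X, BddMeas m X → ∀ (Yn : ℕ → Ω → ℝ) (Y : Ω → ℝ),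
    (∀ n, BddMeas m (Yn n)) → BddMeas m Y →
    (∃ M : ℝ, ∀ n ω, |Yn n ω| ≤ M) →
    (∀ ω, Filter.Tendsto (fun n => Yn n ω) Filter.atTop (nhds (Y ω))) →
    ((∀ n, pref X (Yn n)) → pref X Y) ∧ ((∀ n, pref (Yn n) X) → pref Y X)

/-- Axiom (CD): cumulative dominance. -/
def AxiomCD {Ω : Type*} (m : MeasurableSpace Ω) (pref : (Ω → ℝ) → (Ω → ℝ) → Prop) : Prop :=
  ∀ X Y, BddMeas m X → BddMeas m Y →
    (∀ x : ℝ, pref (ind {ω | x < X ω}) (ind {ω | x < Y ω}) ∧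
       pref (ind {ω | x < Y ω}) (ind {ω | x < X ω})) →
    pref X Y ∧ pref Y X

/-- `SSDle P Q` means `Q ≥_ssd P` (second-order stochastic dominance). -/
def SSDle (P Q : Measure ℝ) : Prop :=
  ∀ f : ℝ → ℝ, Monotone f → ConcaveOn ℝ Set.univ f → ∫ x, f x ∂P ≤ ∫ x, f x ∂Q

/-- Comonotonic quasiconcavity of a statistic. -/
def ComonotonicQuasiconcave (γ : Measure ℝ → ℝ) : Prop :=
  ∀ Q P R : Measure ℝ, IsDistribution Q → IsDistribution P → IsDistribution R →
    ∀ l : ℝ, 0 ≤ l → l ≤ 1 →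
    (∀ β : ℝ, 0 < β → β < 1 →
      distQuantile R β = l * distQuantile Q β + (1 - l) * distQuantile P β) →
    min (γ Q) (γ P) ≤ γ R

/-- Exactness of a capacity. -/
def ExactCapacity {Ω : Type*} (m : MeasurableSpace Ω) (ν : Set Ω → ℝ) : Prop :=
  ∀ A : Set Ω, @MeasurableSet Ω m A →
    ∃ μ : @Measure Ω m, @IsProbabilityMeasure Ω m μ ∧
      (∀ B : Set Ω, @MeasurableSet Ω m B → ν B ≤ (μ B).toReal) ∧ (μ A).toReal = ν A


namespace Stmt15Aux

variable {Ω : Type*}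

variable {Ω : Type*}

/-- the quantile set -/
def qset (ν : Set Ω → ℝ) (X : Ω → ℝ) (β : ℝ) : Set ℝ := {t : ℝ | ν {ω | t < X ω} < 1 - β}

lemma capQuantile_eq (ν : Set Ω → ℝ) (X : Ω → ℝ) (β : ℝ) :
    capQuantile ν X β = sInf (qset ν X β) := rfl

section basic

variable {ν : Set Ω → ℝ} {X : Ω → ℝ} {M β : ℝ}
  (h0 : ν ∅ = 0) (h1 : ν Set.univ = 1) (hM : ∀ ω, |X ω| ≤ M)

include h0 hM in
lemma mem_qset (hβ : β < 1) : M ∈ qset ν X β := by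
  have : {ω | M < X ω} = (∅ : Set Ω) := by
    ext ω; simp only [Set.mem_setOf_eq, Set.mem_empty_iff_false, iff_false, not_lt]
    exact (abs_le.1 (hM ω)).2
  simp only [qset, Set.mem_setOf_eq, this, h0]; linarith

include h1 hM in
lemma qset_lb (hβ : 0 ≤ β) {t : ℝ} (ht : t ∈ qset ν X β) : -M ≤ t := by
  by_contra hc
  push_neg at hc
  have : {ω | t < X ω} = (Set.univ : Set Ω) := by
    ext ω; simp only [Set.mem_setOf_eq, Set.mem_univ, iff_true]
    have := (abs_le.1 (hM ω)).1; linarith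
  simp only [qset, Set.mem_setOf_eq, this, h1] at ht; linarith

include h1 hM in
lemma qset_bddBelow (hβ : 0 ≤ β) : BddBelow (qset ν X β) :=
  ⟨-M, fun _ ht => qset_lb h1 hM hβ ht⟩

include h0 h1 hM in
lemma capQuantile_le (hβ0 : 0 ≤ β) (hβ1 : β < 1) : capQuantile ν X β ≤ M :=
  csInf_le (qset_bddBelow h1 hM hβ0) (mem_qset h0 hM hβ1)

include h0 h1 hM in
lemma neg_le_capQuantile (hβ0 : 0 ≤ β) (hβ1 : β < 1) : -M ≤ capQuantile ν X β :=
  le_csInf ⟨M, mem_qset h0 hM hβ1⟩ fun _ ht => qset_lb h1 hM hβ0 ht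

include h0 h1 hM in
lemma abs_capQuantile_le (hβ0 : 0 ≤ β) (hβ1 : β < 1) : |capQuantile ν X β| ≤ M :=
  abs_le.2 ⟨neg_le_capQuantile h0 h1 hM hβ0 hβ1, capQuantile_le h0 h1 hM hβ0 hβ1⟩

include h0 h1 hM in
lemma capQuantile_mono {β₁ β₂ : ℝ} (h0' : 0 ≤ β₁) (h2 : β₂ < 1) (h12 : β₁ ≤ β₂) :
    capQuantile ν X β₁ ≤ capQuantile ν X β₂ := by
  refine csInf_le_csInf (qset_bddBelow h1 hM h0') ⟨M, mem_qset h0 hM h2⟩ ?_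
  intro t ht
  simp only [qset, Set.mem_setOf_eq] at ht ⊢
  linarith

include h0 h1 hM in
lemma capQuantile_monotoneOn {α : ℝ} (hα : α ≤ 1) :
    MonotoneOn (capQuantile ν X) (Set.Ioo 0 α) := by
  intro β₁ h₁ β₂ h₂ h12
  exact capQuantile_mono h0 h1 hM h₁.1.le (lt_of_lt_of_le h₂.2 hα) h12

include h0 h1 hM in
lemma capQuantile_integrableOn {α : ℝ} (hα0 : 0 < α) (hα : α ≤ 1) :
    IntegrableOn (capQuantile ν X) (Set.Ioo 0 α) volume := by
  have hmeas : AEMeasurable (capQuantile ν X) (volume.restrict (Set.Ioo 0 α)) :=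
    aemeasurable_restrict_of_monotoneOn measurableSet_Ioo
      (capQuantile_monotoneOn h0 h1 hM hα)
  refine Integrable.mono' (integrable_const M) hmeas.aestronglyMeasurable ?_
  refine (ae_restrict_iff' measurableSet_Ioo).2 (Filter.Eventually.of_forall ?_)
  intro β hβ
  exact abs_capQuantile_le h0 h1 hM hβ.1.le (lt_of_lt_of_le hβ.2 hα)

lemma capQuantile_nonneg (h1 : ν Set.univ = 1) (hX : ∀ ω, 0 ≤ X ω) (hβ0 : 0 ≤ β) :
    0 ≤ capQuantile ν X β := by
  rw [capQuantile_eq]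
  rcases Set.eq_empty_or_nonempty (qset ν X β) with h | h
  · rw [h, Real.sInf_empty]
  · refine le_csInf h fun t ht => ?_
    by_contra hc
    push_neg at hc
    have : {ω | t < X ω} = (Set.univ : Set Ω) := by
      ext ω; simp only [Set.mem_setOf_eq, Set.mem_univ, iff_true]
      exact lt_of_lt_of_le hc (hX ω)
    simp only [qset, Set.mem_setOf_eq, this, h1] at ht; linarith

end basic

/-- comparison of quantiles for two capacities -/
lemma capQuantile_le_capQuantile {ν w : Set Ω → ℝ} {X : Ω → ℝ} {M β : ℝ}
    (hw0 : w ∅ = 0) (h1 : ν Set.univ = 1) (hM : ∀ ω, |X ω| ≤ M)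
    (hle : ∀ t : ℝ, ν {ω | t < X ω} ≤ w {ω | t < X ω})
    (hβ0 : 0 ≤ β) (hβ1 : β < 1) :
    capQuantile ν X β ≤ capQuantile w X β := by
  refine csInf_le_csInf (qset_bddBelow h1 hM hβ0) ⟨M, mem_qset hw0 hM hβ1⟩ ?_
  intro t ht
  simp only [qset, Set.mem_setOf_eq] at ht ⊢
  exact lt_of_le_of_lt (hle t) ht



section meas
variable [F : MeasurableSpace Ω]



lemma ind_mem {A : Set Ω} {ω : Ω} (h : ω ∈ A) : ind A ω = 1 := by
  simp [ind, Set.indicator_of_mem h]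

lemma ind_not_mem {A : Set Ω} {ω : Ω} (h : ω ∉ A) : ind A ω = 0 := by
  simp [ind, Set.indicator_of_notMem h]

lemma ind_nonneg (A : Set Ω) (ω : Ω) : 0 ≤ ind A ω := by
  by_cases h : ω ∈ A
  · rw [ind_mem h]; norm_num
  · rw [ind_not_mem h]

lemma ind_le_one (A : Set Ω) (ω : Ω) : ind A ω ≤ 1 := by
  by_cases h : ω ∈ A
  · rw [ind_mem h]
  · rw [ind_not_mem h]; norm_num

/-- value of binary act -/
lemma binary_val {A : Set Ω} {x y : ℝ} {Z : Ω → ℝ}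
    (hZ : ∀ ω, Z ω = x * ind A ω + y * ind Aᶜ ω) (ω : Ω) :
    Z ω = if ω ∈ A then x else y := by
  rw [hZ]
  by_cases h : ω ∈ A
  · simp [h, ind_mem h, ind_not_mem (by simp [h] : ω ∉ Aᶜ)]
  · simp [h, ind_not_mem h, ind_mem (by simp [h] : ω ∈ Aᶜ)]

/-- quantile of a binary act -/
lemma capQuantile_binary {ν : Set Ω → ℝ} {A : Set Ω} {x y β : ℝ} {Z : Ω → ℝ}
    (h0 : ν ∅ = 0) (h1 : ν Set.univ = 1)
    (hZ : ∀ ω, Z ω = x * ind A ω + y * ind Aᶜ ω) (hyx : y ≤ x)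
    (hβ0 : 0 < β) (hβ1 : β < 1) :
    capQuantile ν Z β = if ν A < 1 - β then y else x := by
  have hv := binary_val hZ
  have hset : ∀ t : ℝ, {ω | t < Z ω} =
      if t < y then Set.univ else if t < x then A else ∅ := by
    intro t
    ext ω
    rw [Set.mem_setOf_eq, hv ω]
    by_cases hA : ω ∈ A
    · simp only [hA, if_true]
      rcases lt_or_ge t y with h | h
      · simp [h, lt_of_lt_of_le h hyx]
      · rcases lt_or_ge t x with h' | h'
        · simp [not_lt.2 h, h', hA]
        · simp [not_lt.2 h, not_lt.2 h', h'.not_gt]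
    · simp only [hA, if_false]
      rcases lt_or_ge t y with h | h
      · simp [h]
      · rcases lt_or_ge t x with h' | h'
        · simp [not_lt.2 h, h', hA, h.not_gt]
        · simp [not_lt.2 h, not_lt.2 h', h.not_gt]
  by_cases hp : ν A < 1 - β
  · have : {t : ℝ | ν {ω | t < Z ω} < 1 - β} = Set.Ici y := by
      ext t
      rw [Set.mem_setOf_eq, hset t, Set.mem_Ici]
      rcases lt_or_ge t y with h | h
      · simp only [h, if_true, h1]
        constructor
        · intro hh; linarith
        · intro hh; linarith
      · rcases lt_or_ge t x with h' | h'
        · simp [not_lt.2 h, h', hp, h]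
        · simp [not_lt.2 h, not_lt.2 h', h0, h]; linarith
    rw [capQuantile, this, csInf_Ici, if_pos hp]
  · have : {t : ℝ | ν {ω | t < Z ω} < 1 - β} = Set.Ici x := by
      ext t
      rw [Set.mem_setOf_eq, hset t, Set.mem_Ici]
      rcases lt_or_ge t y with h | h
      · simp only [h, if_true, h1]
        constructor
        · intro hh; linarith
        · intro hh; exfalso; linarith
      · rcases lt_or_ge t x with h' | h'
        · simp [not_lt.2 h, h', hp, h'.not_ge]
        · simp only [not_lt.2 h, not_lt.2 h', if_false, h0]
          constructor
          · intro _; linarith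
          · intro _; linarith
    rw [capQuantile, this, csInf_Ici, if_neg hp]

/-- integral of a two-valued step function over (0, α) -/
lemma step_integral {f : ℝ → ℝ} {x y p α : ℝ}
    (hp0 : 0 ≤ p) (hp1 : p ≤ 1) (hα0 : 0 < α) (hα1 : α ≤ 1)
    (hf : ∀ β ∈ Set.Ioo (0:ℝ) α, f β = if p < 1 - β then y else x) :
    ∫ β in Set.Ioo (0:ℝ) α, f β =
      y * min α (1 - p) + x * (α - min α (1 - p)) := by
  set m := min α (1 - p) with hm
  have hm0 : 0 ≤ m := le_min hα0.le (by linarith)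
  have hmα : m ≤ α := min_le_left _ _
  have hI : Set.Ioo (0:ℝ) α = Set.Ioo 0 m ∪ (Set.Ioo 0 α ∩ Set.Ici (1 - p)) := by
    ext β
    simp only [Set.mem_Ioo, Set.mem_union, Set.mem_inter_iff, Set.mem_Ici]
    constructor
    · intro ⟨h1, h2⟩
      rcases lt_or_ge β m with h | h
      · exact Or.inl ⟨h1, h⟩
      · right
        refine ⟨⟨h1, h2⟩, ?_⟩
        rcases le_total α (1 - p) with hc | hc
        · have hmm : m = α := min_eq_left hc
          rw [hmm] at h; linarith
        · have hmm : m = 1 - p := min_eq_right hc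
          rw [hmm] at h; linarith
    · rintro (⟨h1, h2⟩ | ⟨⟨h1, h2⟩, _⟩)
      · exact ⟨h1, lt_of_lt_of_le h2 hmα⟩
      · exact ⟨h1, h2⟩
  have hdisj : Disjoint (Set.Ioo (0:ℝ) m) (Set.Ioo 0 α ∩ Set.Ici (1 - p)) := by
    rw [Set.disjoint_left]
    rintro β ⟨h1, h2⟩ ⟨_, h4⟩
    rw [Set.mem_Ici] at h4
    have : m ≤ 1 - p := min_le_right _ _
    linarith
  have hmeas2 : MeasurableSet (Set.Ioo (0:ℝ) α ∩ Set.Ici (1 - p)) :=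
    measurableSet_Ioo.inter measurableSet_Ici
  have hfy : Set.EqOn f (fun _ => y) (Set.Ioo 0 m) := by
    intro β hβ
    have hβα : β ∈ Set.Ioo (0:ℝ) α := ⟨hβ.1, lt_of_lt_of_le hβ.2 hmα⟩
    have : p < 1 - β := by
      have h1 : m ≤ 1 - p := min_le_right _ _
      have h2 := hβ.2
      linarith
    rw [hf β hβα, if_pos this]
  have hfx : Set.EqOn f (fun _ => x) (Set.Ioo 0 α ∩ Set.Ici (1 - p)) := by
    rintro β ⟨hβα, hβp⟩
    have : ¬ p < 1 - β := by rw [Set.mem_Ici] at hβp; linarith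
    rw [hf β hβα, if_neg this]
  have hint1 : IntegrableOn f (Set.Ioo 0 m) volume :=
    (integrableOn_const (by rw [Real.volume_Ioo]; exact ENNReal.ofReal_ne_top)).congr_fun
      hfy.symm measurableSet_Ioo
  have hint2 : IntegrableOn f (Set.Ioo 0 α ∩ Set.Ici (1 - p)) volume := by
    refine (integrableOn_const (lt_top_iff_ne_top.1 ?_)).congr_fun hfx.symm hmeas2
    exact lt_of_le_of_lt (measure_mono Set.inter_subset_left)
      (by rw [Real.volume_Ioo]; exact ENNReal.ofReal_lt_top)
  have hvol2 : (volume (Set.Ioo (0:ℝ) α ∩ Set.Ici (1 - p))).toReal = α - m := by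
    rcases le_or_gt α (1 - p) with h | h
    · have hmm : m = α := min_eq_left h
      have : Set.Ioo (0:ℝ) α ∩ Set.Ici (1 - p) = ∅ := by
        ext β
        simp only [Set.mem_inter_iff, Set.mem_Ioo, Set.mem_Ici, Set.mem_empty_iff_false,
          iff_false, not_and]
        rintro ⟨_, h2⟩
        intro hc; linarith
      rw [this]; simp [hmm]
    · have hmm : m = 1 - p := min_eq_right h.le
      have h1p : (0:ℝ) ≤ 1 - p := by linarith
      rcases eq_or_lt_of_le h1p with he | hlt
      · have hset : Set.Ioo (0:ℝ) α ∩ Set.Ici (1 - p) = Set.Ioo 0 α := by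
          ext β
          simp only [Set.mem_inter_iff, Set.mem_Ioo, Set.mem_Ici]
          constructor
          · rintro ⟨hb, _⟩; exact hb
          · rintro ⟨hb1, hb2⟩; exact ⟨⟨hb1, hb2⟩, by linarith⟩
        rw [hset, Real.volume_Ioo, sub_zero, ENNReal.toReal_ofReal hα0.le, hmm, ← he]
        ring
      · have hset : Set.Ioo (0:ℝ) α ∩ Set.Ici (1 - p) = Set.Ico (1 - p) α := by
          ext β
          simp only [Set.mem_inter_iff, Set.mem_Ioo, Set.mem_Ici, Set.mem_Ico]
          constructor
          · rintro ⟨⟨_, h2⟩, h3⟩; exact ⟨h3, h2⟩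
          · rintro ⟨h1, h2⟩
            exact ⟨⟨by linarith, h2⟩, h1⟩
        rw [hset, Real.volume_Ico, ENNReal.toReal_ofReal (by linarith), hmm]
  calc ∫ β in Set.Ioo (0:ℝ) α, f β
      = (∫ β in Set.Ioo (0:ℝ) m, f β) + ∫ β in Set.Ioo (0:ℝ) α ∩ Set.Ici (1 - p), f β := by
        rw [← setIntegral_union hdisj hmeas2 hint1 hint2, ← hI]
    _ = y * m + x * (α - m) := by
        rw [setIntegral_congr_fun measurableSet_Ioo hfy, setIntegral_congr_fun hmeas2 hfx,
          setIntegral_const, setIntegral_const, measureReal_def, measureReal_def, Real.volume_Ioo, sub_zero,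
          ENNReal.toReal_ofReal hm0, hvol2, smul_eq_mul, smul_eq_mul, mul_comm, mul_comm x]

/-- interval integral to set integral over Ioo -/
lemma intervalIntegral_eq_Ioo (f : ℝ → ℝ) {α : ℝ} (hα : 0 ≤ α) :
    ∫ β in (0:ℝ)..α, f β = ∫ β in Set.Ioo (0:ℝ) α, f β := by
  rw [intervalIntegral.integral_of_le hα]
  exact (setIntegral_congr_set Ioo_ae_eq_Ioc).symm


section ES

variable {μ : Measure Ω} [IsProbabilityMeasure μ] {X : Ω → ℝ} {M : ℝ}

lemma integrable_of_bound {Y : Ω → ℝ} {C : ℝ} (hY : Measurable Y)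
    (hC : ∀ ω, |Y ω| ≤ C) : Integrable Y μ :=
  (integrable_const C).mono' hY.aestronglyMeasurable (Filter.Eventually.of_forall hC)

lemma meas_lt_limit (hX : Measurable X) {t δ : ℝ}
    (h : (μ {ω | t ≤ X ω}).toReal < δ) :
    ∃ u < t, (μ {ω | u < X ω}).toReal < δ := by
  set S : ℕ → Set Ω := fun n => {ω | t - 1 / (n + 1) < X ω} with hS
  have hmeas : ∀ n, MeasurableSet (S n) := fun n => hX measurableSet_Ioi
  have hanti : Antitone S := by
    intro n m hnm
    intro ω hω
    simp only [hS, Set.mem_setOf_eq] at hω ⊢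
    have h1 : (1:ℝ) / (m + 1) ≤ 1 / (n + 1) := by
      have hnm' : (n:ℝ) ≤ m := Nat.cast_le.mpr hnm
      apply one_div_le_one_div_of_le
      · positivity
      · linarith
    linarith
  have hiInter : (⋂ n, S n) = {ω | t ≤ X ω} := by
    ext ω
    simp only [Set.mem_iInter, hS, Set.mem_setOf_eq]
    constructor
    · intro hall
      by_contra hc
      push_neg at hc
      obtain ⟨n, hn⟩ := exists_nat_one_div_lt (sub_pos.2 hc)
      have := hall n
      linarith
    · intro hle n
      have : (0:ℝ) < 1 / (n + 1) := by positivity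
      linarith
  have htendsto : Tendsto (fun n => μ (S n)) atTop (𝓝 (μ (⋂ n, S n))) :=
    tendsto_measure_iInter_atTop (fun n => (hmeas n).nullMeasurableSet) hanti
      ⟨0, measure_ne_top μ _⟩
  have htoReal : Tendsto (fun n => (μ (S n)).toReal) atTop (𝓝 ((μ {ω | t ≤ X ω}).toReal)) := by
    rw [← hiInter]
    exact (ENNReal.tendsto_toReal (measure_ne_top μ _)).comp htendsto
  obtain ⟨n, hn⟩ := (htoReal.eventually_lt_const h).exists
  refine ⟨t - 1 / (n + 1), ?_, hn⟩
  have : (0:ℝ) < 1 / (n + 1) := by positivity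
  linarith

lemma capQuantile_lt_of_meas (hX : Measurable X) (hM : ∀ ω, |X ω| ≤ M)
    {β t : ℝ} (hβ0 : 0 < β)
    (hb : β < (μ {ω | X ω < t}).toReal) :
    capQuantile (fun B => (μ B).toReal) X β < t := by
  have hcompl : {ω | X ω < t}ᶜ = {ω | t ≤ X ω} := by
    ext ω; simp [not_lt]
  have hms : MeasurableSet {ω | X ω < t} := hX measurableSet_Iio
  have h1 : (μ {ω | t ≤ X ω}).toReal = 1 - (μ {ω | X ω < t}).toReal := by
    rw [← hcompl, prob_compl_eq_one_sub hms,
      ENNReal.toReal_sub_of_le prob_le_one ENNReal.one_ne_top, ENNReal.toReal_one]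
  have h2 : (μ {ω | t ≤ X ω}).toReal < 1 - β := by rw [h1]; linarith
  obtain ⟨u, hu, hmu⟩ := meas_lt_limit hX h2
  have hmem : u ∈ {x : ℝ | (fun B => (μ B).toReal) {ω | x < X ω} < 1 - β} := hmu
  have : capQuantile (fun B => (μ B).toReal) X β ≤ u :=
    csInf_le (qset_bddBelow (ν := fun B => (μ B).toReal) (by simp) hM hβ0.le) hmem
  linarith

/-- Key inequality: integral of the lower quantile over (0,α) is at most `∫ X g` for
any `g` with values in `[0,1]` and mean `α`. -/
lemma es_lower_bound {g : Ω → ℝ} {α : ℝ}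
    (hX : Measurable X) (hM : ∀ ω, |X ω| ≤ M)
    (hg : Measurable g) (hg0 : ∀ ω, 0 ≤ g ω) (hg1 : ∀ ω, g ω ≤ 1)
    (hgint : ∫ ω, g ω ∂μ = α) (hα0 : 0 < α) (hα1 : α ≤ 1) :
    ∫ β in Set.Ioo (0:ℝ) α, capQuantile (fun B => (μ B).toReal) X β
      ≤ ∫ ω, X ω * g ω ∂μ := by
  set w : Set Ω → ℝ := fun B => (μ B).toReal with hw
  have h0 : w ∅ = 0 := by simp [hw]
  have h1 : w Set.univ = 1 := by simp [hw]
  set q : ℝ → ℝ := capQuantile w X with hq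
  have hne : Nonempty Ω := by
    by_contra h
    have : (Set.univ : Set Ω) = ∅ := Set.univ_eq_empty_iff.2 (not_nonempty_iff.1 h)
    have h2 : μ (Set.univ : Set Ω) = 1 := measure_univ
    rw [this] at h2; simp at h2
  have hM0 : 0 ≤ M := le_trans (abs_nonneg _) (hM hne.some)
  set c : ℝ := if α = 1 then M else q α with hc
  have hqle : ∀ β ∈ Set.Ioo (0:ℝ) α, q β ≤ c := by
    intro β hβ
    by_cases h : α = 1
    · rw [hc, if_pos h]
      exact capQuantile_le h0 h1 hM hβ.1.le (by rw [h] at hβ; exact hβ.2)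
    · rw [hc, if_neg h]
      exact capQuantile_mono h0 h1 hM hβ.1.le (lt_of_le_of_ne hα1 h) hβ.2.le
  have hcM : c ≤ M := by
    by_cases h : α = 1
    · rw [hc, if_pos h]
    · rw [hc, if_neg h]
      exact capQuantile_le h0 h1 hM hα0.le (lt_of_le_of_ne hα1 h)
  have hcm : -M ≤ c := by
    by_cases h : α = 1
    · rw [hc, if_pos h]; linarith
    · rw [hc, if_neg h]
      exact neg_le_capQuantile h0 h1 hM hα0.le (lt_of_le_of_ne hα1 h)
  set φ : Ω → ℝ := fun ω => max (c - X ω) 0 with hφ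
  have hφmeas : Measurable φ := (measurable_const.sub hX).max measurable_const
  have hφnn : ∀ ω, 0 ≤ φ ω := fun ω => le_max_right _ _
  have hq_int : IntegrableOn q (Set.Ioo 0 α) volume :=
    capQuantile_integrableOn h0 h1 hM hα0 hα1
  have hq_aemeas : AEMeasurable q (volume.restrict (Set.Ioo 0 α)) :=
    aemeasurable_restrict_of_monotoneOn measurableSet_Ioo
      (capQuantile_monotoneOn h0 h1 hM hα1)
  -- measure comparison, pointwise in s > 0
  have key : ∀ s : ℝ, s ∈ Set.Ioi (0:ℝ) →
      μ {ω | s < φ ω} ≤ (volume.restrict (Set.Ioo 0 α)) {β | s < c - q β} := by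
    intro s hs
    rw [Set.mem_Ioi] at hs
    have hset1 : {ω | s < φ ω} = {ω | X ω < c - s} := by
      ext ω
      simp only [hφ, Set.mem_setOf_eq, lt_max_iff, lt_sup_iff]
      constructor
      · rintro (h | h)
        · linarith
        · linarith
      · intro h; left; linarith
    set r : ℝ := (μ {ω | X ω < c - s}).toReal with hr
    have hrα : r ≤ α := by
      by_cases hone : α = 1
      · rw [hone]
        calc r ≤ (1 : ℝ≥0∞).toReal := ENNReal.toReal_mono ENNReal.one_ne_top prob_le_one
          _ = 1 := ENNReal.toReal_one
      · by_contra hcon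
        push_neg at hcon
        have hq2 : q α < c - s := capQuantile_lt_of_meas hX hM hα0 hcon
        have : c = q α := by rw [hc, if_neg hone]
        linarith
    have hsub : Set.Ioo (0:ℝ) r ⊆ {β | s < c - q β} ∩ Set.Ioo 0 α := by
      intro β hβ
      have hq3 : q β < c - s := capQuantile_lt_of_meas hX hM hβ.1 hβ.2
      refine ⟨?_, hβ.1, lt_of_lt_of_le hβ.2 hrα⟩
      simp only [Set.mem_setOf_eq]
      linarith
    calc μ {ω | s < φ ω} = μ {ω | X ω < c - s} := by rw [hset1]
      _ = ENNReal.ofReal r := (ENNReal.ofReal_toReal (measure_ne_top μ _)).symm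
      _ = volume (Set.Ioo (0:ℝ) r) := by rw [Real.volume_Ioo, sub_zero]
      _ ≤ volume ({β | s < c - q β} ∩ Set.Ioo 0 α) := measure_mono hsub
      _ = (volume.restrict (Set.Ioo 0 α)) {β | s < c - q β} :=
          (Measure.restrict_apply' measurableSet_Ioo).symm
  -- layercake on both sides
  have hψnn : 0 ≤ᵐ[volume.restrict (Set.Ioo (0:ℝ) α)] fun β => c - q β :=
    (ae_restrict_iff' measurableSet_Ioo).2
      (Filter.Eventually.of_forall fun β hβ => by
        have := hqle β hβ; simp only [Pi.zero_apply]; linarith)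
  have hψm : AEMeasurable (fun β => c - q β) (volume.restrict (Set.Ioo (0:ℝ) α)) :=
    aemeasurable_const.sub hq_aemeas
  have lay1 : ∫⁻ ω, ENNReal.ofReal (φ ω) ∂μ = ∫⁻ s in Set.Ioi (0:ℝ), μ {ω | s < φ ω} :=
    lintegral_eq_lintegral_meas_lt μ (Filter.Eventually.of_forall hφnn) hφmeas.aemeasurable
  have lay2 : ∫⁻ β in Set.Ioo (0:ℝ) α, ENNReal.ofReal (c - q β)
      = ∫⁻ s in Set.Ioi (0:ℝ), (volume.restrict (Set.Ioo (0:ℝ) α)) {β | s < c - q β} :=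
    lintegral_eq_lintegral_meas_lt _ hψnn hψm
  have hmono : ∫⁻ ω, ENNReal.ofReal (φ ω) ∂μ
      ≤ ∫⁻ β in Set.Ioo (0:ℝ) α, ENNReal.ofReal (c - q β) := by
    rw [lay1, lay2]
    exact lintegral_mono_ae ((ae_restrict_iff' measurableSet_Ioi).2
      (Filter.Eventually.of_forall key))
  have hfin : ∫⁻ β in Set.Ioo (0:ℝ) α, ENNReal.ofReal (c - q β) ≠ ⊤ := by
    have hbd : ∀ᵐ β ∂(volume.restrict (Set.Ioo (0:ℝ) α)),
        ENNReal.ofReal (c - q β) ≤ ENNReal.ofReal (c + M) := by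
      refine (ae_restrict_iff' measurableSet_Ioo).2 (Filter.Eventually.of_forall ?_)
      intro β hβ
      refine ENNReal.ofReal_le_ofReal ?_
      have : -M ≤ q β :=
        neg_le_capQuantile h0 h1 hM hβ.1.le (lt_of_lt_of_le hβ.2 hα1)
      linarith
    refine ne_top_of_le_ne_top ?_ (lintegral_mono_ae hbd)
    rw [lintegral_const, Measure.restrict_apply_univ, Real.volume_Ioo]
    exact ENNReal.mul_ne_top ENNReal.ofReal_ne_top ENNReal.ofReal_ne_top
  -- turn into real integrals
  have lhsEq : ∫ ω, φ ω ∂μ = (∫⁻ ω, ENNReal.ofReal (φ ω) ∂μ).toReal :=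
    integral_eq_lintegral_of_nonneg_ae (Filter.Eventually.of_forall hφnn)
      hφmeas.aestronglyMeasurable
  have rhsEq : ∫ β in Set.Ioo (0:ℝ) α, (c - q β)
      = (∫⁻ β in Set.Ioo (0:ℝ) α, ENNReal.ofReal (c - q β)).toReal :=
    integral_eq_lintegral_of_nonneg_ae hψnn hψm.aestronglyMeasurable
  have hφψ : ∫ ω, φ ω ∂μ ≤ ∫ β in Set.Ioo (0:ℝ) α, (c - q β) := by
    rw [lhsEq, rhsEq]
    exact ENNReal.toReal_mono hfin hmono
  -- compute ∫ (c - q) over Ioo 0 α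
  have hconst_int : IntegrableOn (fun _ : ℝ => c) (Set.Ioo (0:ℝ) α) volume :=
    integrableOn_const (by rw [Real.volume_Ioo]; exact ENNReal.ofReal_ne_top)
  have hsplit : ∫ β in Set.Ioo (0:ℝ) α, (c - q β)
      = c * α - ∫ β in Set.Ioo (0:ℝ) α, q β := by
    rw [integral_sub hconst_int hq_int, setIntegral_const, measureReal_def, Real.volume_Ioo, sub_zero,
      ENNReal.toReal_ofReal hα0.le, smul_eq_mul]
    ring
  -- pointwise inequality on Ω
  have hpt : ∀ ω, c * g ω - φ ω ≤ X ω * g ω := by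
    intro ω
    rcases le_or_gt c (X ω) with h | h
    · have hphi : φ ω = 0 := max_eq_right (by linarith)
      rw [hphi]
      nlinarith [hg0 ω]
    · have hphi : φ ω = c - X ω := max_eq_left (by linarith)
      rw [hphi]
      nlinarith [hg0 ω, hg1 ω]
  have hgbd : ∀ ω, |g ω| ≤ 1 := fun ω => abs_le.2 ⟨by linarith [hg0 ω], hg1 ω⟩
  have hgInt : Integrable g μ := integrable_of_bound hg hgbd
  have hXgInt : Integrable (fun ω => X ω * g ω) μ := by
    refine integrable_of_bound (hX.mul hg) (C := M) fun ω => ?_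
    rw [abs_mul]
    calc |X ω| * |g ω| ≤ M * 1 :=
          mul_le_mul (hM ω) (hgbd ω) (abs_nonneg _) hM0
      _ = M := mul_one M
  have hφInt : Integrable φ μ := by
    refine integrable_of_bound hφmeas (C := |c| + M) fun ω => ?_
    rw [abs_of_nonneg (hφnn ω)]
    refine max_le ?_ (by positivity)
    have := (abs_le.1 (hM ω)).1
    have := le_abs_self c
    linarith
  have hint2 : ∫ ω, (c * g ω - φ ω) ∂μ = c * α - ∫ ω, φ ω ∂μ := by
    rw [integral_sub (hgInt.const_mul c) hφInt, integral_const_mul, hgint]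
  have hfinal : c * α - ∫ ω, φ ω ∂μ ≤ ∫ ω, X ω * g ω ∂μ := by
    rw [← hint2]
    exact integral_mono ((hgInt.const_mul c).sub hφInt) hXgInt hpt
  have := hφψ
  rw [hsplit] at this
  linarith
end ES


end meas

section forward
variable [F : MeasurableSpace Ω]

lemma forward_main {ν : Set Ω → ℝ} (hcap : IsCapacity F ν) (hex : ExactCapacity F ν)
    {n : ℕ} (X : Fin n → Ω → ℝ) (l : Fin n → ℝ) (hX : ∀ k, BddMeas F (X k))
    (hl : ∀ k, 0 ≤ l k ∧ l k ≤ 1)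
    {A : Set Ω} {x y : ℝ} (hA : MeasurableSet A)
    (hZ : ∀ ω, (∑ k, l k * X k ω) = x * ind A ω + y * ind Aᶜ ω)
    (hyx : y ≤ x) {α : ℝ} (hα0 : 0 < α) (hα1 : α ≤ 1) :
    (∑ k, l k * ∫ β in (0:ℝ)..α, capQuantile ν (X k) β) ≤
      ∫ β in (0:ℝ)..α, capQuantile ν (fun ω => ∑ k, l k * X k ω) β := by
  obtain ⟨hν0, hν1, hνmono⟩ := hcap
  obtain ⟨μ, hμprob, hμcore, hμA⟩ := hex A hA
  haveI := hμprob
  set w : Set Ω → ℝ := fun B => (μ B).toReal with hw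
  have hw0 : w ∅ = 0 := by simp [hw]
  have hw1 : w Set.univ = 1 := by simp [hw]
  set p : ℝ := ν A with hpdef
  have hp : (μ A).toReal = p := hμA
  have hp0 : 0 ≤ p := by
    have := hνmono ∅ A MeasurableSet.empty hA (Set.empty_subset A)
    rw [hν0] at this; exact this
  have hp1 : p ≤ 1 := by
    have := hνmono A Set.univ hA MeasurableSet.univ (Set.subset_univ A)
    rw [hν1] at this; exact this
  have hcompl : (μ Aᶜ).toReal = 1 - p := by
    rw [prob_compl_eq_one_sub hA,
      ENNReal.toReal_sub_of_le prob_le_one ENNReal.one_ne_top, ENNReal.toReal_one, hp]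
  set Z : Ω → ℝ := fun ω => ∑ k, l k * X k ω with hZdef
  have hZval : ∀ ω, Z ω = if ω ∈ A then x else y := binary_val hZ
  have hZmeas : Measurable Z :=
    Finset.measurable_sum Finset.univ fun k _ => ((hX k).1.const_mul (l k))
  have hZbd : ∀ ω, |Z ω| ≤ |x| + |y| := by
    intro ω
    rw [hZval ω]
    by_cases h : ω ∈ A
    · rw [if_pos h]; have := abs_nonneg y; linarith [le_refl |x|]
    · rw [if_neg h]; have := abs_nonneg x; linarith [le_refl |y|]
  set m : ℝ := min α (1 - p) with hm
  -- choose the optimal weights a, b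
  obtain ⟨a, b, ha0, ha1, hb0, hb1, habα, hval⟩ :
      ∃ a b : ℝ, 0 ≤ a ∧ a ≤ 1 ∧ 0 ≤ b ∧ b ≤ 1 ∧ a * p + b * (1 - p) = α ∧
        x * (a * p) + y * (b * (1 - p)) = y * m + x * (α - m) := by
    rcases le_or_gt α (1 - p) with hcase | hcase
    · have hppos : 0 < 1 - p := lt_of_lt_of_le hα0 hcase
      refine ⟨0, α / (1 - p), le_refl 0, zero_le_one, div_nonneg hα0.le hppos.le,
        (div_le_one hppos).2 hcase, by field_simp; ring, ?_⟩
      have hmeq : m = α := min_eq_left hcase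
      rw [hmeq]
      field_simp
      ring
    · have hppos : 0 < p := by linarith
      refine ⟨(α - (1 - p)) / p, 1, div_nonneg (by linarith) hppos.le,
        (div_le_one hppos).2 (by linarith),
        zero_le_one, le_refl 1, by field_simp; ring, ?_⟩
      have hmeq : m = 1 - p := min_eq_right hcase.le
      rw [hmeq]
      field_simp
      try ring
  set g : Ω → ℝ := fun ω => a * ind A ω + b * ind Aᶜ ω with hg
  have hgval : ∀ ω, g ω = if ω ∈ A then a else b := by
    intro ω
    by_cases h : ω ∈ A
    · simp [hg, h, ind_mem h, ind_not_mem (by simp [h] : ω ∉ Aᶜ)]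
    · simp [hg, h, ind_not_mem h, ind_mem (by simp [h] : ω ∈ Aᶜ)]
  have hgmeas : Measurable g :=
    ((measurable_const.indicator hA).const_mul a).add
      ((measurable_const.indicator hA.compl).const_mul b)
  have hg0 : ∀ ω, 0 ≤ g ω := by
    intro ω; rw [hgval ω]; by_cases h : ω ∈ A
    · rw [if_pos h]; exact ha0
    · rw [if_neg h]; exact hb0
  have hg1 : ∀ ω, g ω ≤ 1 := by
    intro ω; rw [hgval ω]; by_cases h : ω ∈ A
    · rw [if_pos h]; exact ha1
    · rw [if_neg h]; exact hb1
  have hindA : Integrable (ind A) μ := (integrable_const (1:ℝ)).indicator hA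
  have hindAc : Integrable (ind Aᶜ) μ := (integrable_const (1:ℝ)).indicator hA.compl
  have hintA : ∫ ω, ind A ω ∂μ = (μ A).toReal := by
    unfold ind
    rw [integral_indicator_const (1:ℝ) hA, smul_eq_mul, mul_one, measureReal_def]
  have hintAc : ∫ ω, ind Aᶜ ω ∂μ = (μ Aᶜ).toReal := by
    unfold ind
    rw [integral_indicator_const (1:ℝ) hA.compl, smul_eq_mul, mul_one, measureReal_def]
  have hgint : ∫ ω, g ω ∂μ = α := by
    have h2 : ∫ ω, g ω ∂μ = a * (μ A).toReal + b * (μ Aᶜ).toReal := by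
      rw [hg]
      rw [integral_add (hindA.const_mul a) (hindAc.const_mul b), integral_const_mul,
        integral_const_mul, hintA, hintAc]
    rw [h2, hp, hcompl, habα]
  -- per-component inequality
  have hk : ∀ k : Fin n, ∫ β in Set.Ioo (0:ℝ) α, capQuantile ν (X k) β
      ≤ ∫ ω, X k ω * g ω ∂μ := by
    intro k
    obtain ⟨hXm, Mk, hMk⟩ := hX k
    have hle : ∀ t : ℝ, ν {ω | t < X k ω} ≤ w {ω | t < X k ω} := by
      intro t
      exact hμcore _ (hXm measurableSet_Ioi)
    have step1 : ∫ β in Set.Ioo (0:ℝ) α, capQuantile ν (X k) β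
        ≤ ∫ β in Set.Ioo (0:ℝ) α, capQuantile w (X k) β := by
      refine setIntegral_mono_on (capQuantile_integrableOn hν0 hν1 hMk hα0 hα1)
        (capQuantile_integrableOn hw0 hw1 hMk hα0 hα1) measurableSet_Ioo ?_
      intro β hβ
      exact capQuantile_le_capQuantile hw0 hν1 hMk hle hβ.1.le (lt_of_lt_of_le hβ.2 hα1)
    have step2 : ∫ β in Set.Ioo (0:ℝ) α, capQuantile w (X k) β ≤ ∫ ω, X k ω * g ω ∂μ :=
      es_lower_bound hXm hMk hgmeas hg0 hg1 hgint hα0 hα1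
    linarith
  -- integrability of the products
  have hXgInt : ∀ k : Fin n, Integrable (fun ω => X k ω * g ω) μ := by
    intro k
    obtain ⟨hXm, Mk, hMk⟩ := hX k
    refine integrable_of_bound (hXm.mul hgmeas) (C := |Mk|) fun ω => ?_
    rw [abs_mul]
    have h1 : |g ω| ≤ 1 := abs_le.2 ⟨by linarith [hg0 ω], hg1 ω⟩
    calc |X k ω| * |g ω| ≤ |Mk| * 1 :=
          mul_le_mul (le_trans (hMk ω) (le_abs_self Mk)) h1 (abs_nonneg _) (abs_nonneg _)
      _ = |Mk| := mul_one _
  -- sum of products equals integral of Z * g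
  have hsum_int : ∑ k, l k * ∫ ω, X k ω * g ω ∂μ = ∫ ω, Z ω * g ω ∂μ := by
    have h1 : ∀ k : Fin n, l k * ∫ ω, X k ω * g ω ∂μ = ∫ ω, l k * (X k ω * g ω) ∂μ := by
      intro k; rw [integral_const_mul]
    rw [Finset.sum_congr rfl fun k _ => h1 k]
    rw [← integral_finset_sum Finset.univ fun k _ => (hXgInt k).const_mul (l k)]
    congr 1
    ext ω
    rw [hZdef]
    simp only
    rw [Finset.sum_mul]
    exact Finset.sum_congr rfl fun k _ => by ring
  -- value of ∫ Z g
  have hZg : ∫ ω, Z ω * g ω ∂μ = y * m + x * (α - m) := by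
    have heq : (fun ω => Z ω * g ω)
        = fun ω => Set.indicator A (fun _ => x * a) ω + Set.indicator Aᶜ (fun _ => y * b) ω := by
      ext ω
      rw [hZval ω, hgval ω]
      by_cases h : ω ∈ A
      · rw [if_pos h, if_pos h, Set.indicator_of_mem h,
          Set.indicator_of_notMem (by simp [h] : ω ∉ Aᶜ)]
        ring
      · rw [if_neg h, if_neg h, Set.indicator_of_notMem h,
          Set.indicator_of_mem (by simp [h] : ω ∈ Aᶜ)]
        ring
    rw [heq, integral_add ((integrable_const (x*a)).indicator hA)
      ((integrable_const (y*b)).indicator hA.compl),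
      integral_indicator_const _ hA, integral_indicator_const _ hA.compl,
      measureReal_def, measureReal_def, hp, hcompl]
    rw [smul_eq_mul, smul_eq_mul, ← hval]
    try ring
  -- value of quantile integral of Z
  have hZq : ∫ β in Set.Ioo (0:ℝ) α, capQuantile ν Z β = y * m + x * (α - m) := by
    refine step_integral hp0 hp1 hα0 hα1 ?_
    intro β hβ
    have hbin := capQuantile_binary hν0 hν1 hZ hyx hβ.1 (lt_of_lt_of_le hβ.2 hα1)
    rw [hbin]
  -- assemble
  calc (∑ k, l k * ∫ β in (0:ℝ)..α, capQuantile ν (X k) β)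
      = ∑ k, l k * ∫ β in Set.Ioo (0:ℝ) α, capQuantile ν (X k) β := by
        refine Finset.sum_congr rfl fun k _ => ?_
        rw [intervalIntegral_eq_Ioo _ hα0.le]
    _ ≤ ∑ k, l k * ∫ ω, X k ω * g ω ∂μ := by
        refine Finset.sum_le_sum fun k _ => ?_
        exact mul_le_mul_of_nonneg_left (hk k) (hl k).1
    _ = ∫ ω, Z ω * g ω ∂μ := hsum_int
    _ = y * m + x * (α - m) := hZg
    _ = ∫ β in Set.Ioo (0:ℝ) α, capQuantile ν Z β := hZq.symm
    _ = ∫ β in (0:ℝ)..α, capQuantile ν (fun ω => ∑ k, l k * X k ω) β := by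
        rw [intervalIntegral_eq_Ioo _ hα0.le]

end forward

section backward
variable [F : MeasurableSpace Ω]

lemma quantile_integral_nonneg {ν : Set Ω → ℝ} {X : Ω → ℝ}
    (h1 : ν Set.univ = 1) (hX0 : ∀ ω, 0 ≤ X ω) :
    0 ≤ ∫ β in (0:ℝ)..1, capQuantile ν X β := by
  refine intervalIntegral.integral_nonneg zero_le_one ?_
  intro β hβ
  exact capQuantile_nonneg h1 hX0 hβ.1

lemma binary_quantile_integral {ν : Set Ω → ℝ} {A : Set Ω} {x y : ℝ} {Z : Ω → ℝ}
    (h0 : ν ∅ = 0) (h1 : ν Set.univ = 1) (hp0 : 0 ≤ ν A) (hp1 : ν A ≤ 1)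
    (hZ : ∀ ω, Z ω = x * ind A ω + y * ind Aᶜ ω) (hyx : y ≤ x) :
    ∫ β in (0:ℝ)..1, capQuantile ν Z β = y * (1 - ν A) + x * ν A := by
  rw [intervalIntegral_eq_Ioo _ zero_le_one]
  rw [step_integral hp0 hp1 one_pos le_rfl
    (fun β hβ => capQuantile_binary h0 h1 hZ hyx hβ.1 hβ.2)]
  rw [min_eq_right (by linarith : (1:ℝ) - ν A ≤ 1)]
  ring

lemma indicator_quantile_integral {ν : Set Ω → ℝ} {B : Set Ω}
    (h0 : ν ∅ = 0) (h1 : ν Set.univ = 1) (hp0 : 0 ≤ ν B) (hp1 : ν B ≤ 1) :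
    ∫ β in (0:ℝ)..1, capQuantile ν (ind B) β = ν B := by
  have hZ : ∀ ω, ind B ω = 1 * ind B ω + 0 * ind Bᶜ ω := fun ω => by ring
  rw [binary_quantile_integral h0 h1 hp0 hp1 hZ zero_le_one]
  ring

/-- The key balancedness inequality derived from the divergence condition. -/
lemma star_ineq {ν : Set Ω → ℝ} (hcap : IsCapacity F ν)
    (hRHS : ∀ n : ℕ, 1 ≤ n → ∀ (X : Fin n → Ω → ℝ) (l : Fin n → ℝ),
      (∀ k, BddMeas F (X k)) → (∀ k, 0 ≤ l k ∧ l k ≤ 1) → (∑ k, l k) = 1 →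
      ∀ (A : Set Ω) (x y : ℝ), MeasurableSet A →
        (∀ ω, (∑ k, l k * X k ω) = x * ind A ω + y * ind Aᶜ ω) →
        ∀ α : ℝ, 0 < α → α ≤ 1 →
          (∑ k, l k * ∫ β in (0:ℝ)..α, capQuantile ν (X k) β) ≤
          ∫ β in (0:ℝ)..α, capQuantile ν (fun ω => ∑ k, l k * X k ω) β)
    {A : Set Ω} (hA : MeasurableSet A)
    {K : ℕ} (lam : Fin K → ℝ) (B : Fin K → Set Ω) (hlam : ∀ k, 0 ≤ lam k)
    (hB : ∀ k, MeasurableSet (B k)) {mm c : ℝ} (hm : 0 ≤ mm)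
    (hdom : ∀ ω, (∑ k, lam k * ind (B k) ω) ≤ c + mm * ind A ω) :
    (∑ k, lam k * ν (B k)) ≤ c + mm * ν A := by
  obtain ⟨hν0, hν1, hνmono⟩ := hcap
  have hνnonneg : ∀ {C : Set Ω}, MeasurableSet C → 0 ≤ ν C := by
    intro C hC
    have := hνmono ∅ C MeasurableSet.empty hC (Set.empty_subset C)
    rw [hν0] at this; exact this
  have hνle1 : ∀ {C : Set Ω}, MeasurableSet C → ν C ≤ 1 := by
    intro C hC
    have := hνmono C Set.univ hC MeasurableSet.univ (Set.subset_univ C)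
    rw [hν1] at this; exact this
  set S : ℝ := (∑ k, lam k) + 1 with hS
  have hsum_nonneg : 0 ≤ ∑ k, lam k := Finset.sum_nonneg fun k _ => hlam k
  have hSpos : 0 < S := by rw [hS]; linarith
  have hlam_le : ∀ k, lam k ≤ ∑ j, lam j := fun k =>
    Finset.single_le_sum (fun j _ => hlam j) (Finset.mem_univ k)
  set X0 : Ω → ℝ := fun ω => c + mm * ind A ω - ∑ k, lam k * ind (B k) ω with hX0def
  have hX0nn : ∀ ω, 0 ≤ X0 ω := fun ω => by
    rw [hX0def]; simp only; linarith [hdom ω]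
  set X : Fin (K + 1) → Ω → ℝ := Fin.cons X0 (fun k => ind (B k)) with hXdef
  set l : Fin (K + 1) → ℝ := Fin.cons (1 / S) (fun k => lam k / S) with hldef
  have hT_bound : ∀ ω, 0 ≤ (∑ k, lam k * ind (B k) ω) ∧
      (∑ k, lam k * ind (B k) ω) ≤ ∑ k, lam k := by
    intro ω
    constructor
    · exact Finset.sum_nonneg fun k _ => mul_nonneg (hlam k) (ind_nonneg _ ω)
    · refine Finset.sum_le_sum fun k _ => ?_
      calc lam k * ind (B k) ω ≤ lam k * 1 :=
            mul_le_mul_of_nonneg_left (ind_le_one _ ω) (hlam k)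
        _ = lam k := mul_one _
  have hXbdd : ∀ k, BddMeas F (X k) := by
    intro k
    refine Fin.cases ?_ ?_ k
    · rw [hXdef]
      simp only [Fin.cons_zero]
      constructor
      · refine (measurable_const.add ((measurable_const.indicator hA).const_mul mm)).sub ?_
        exact Finset.measurable_sum Finset.univ
          fun j _ => (measurable_const.indicator (hB j)).const_mul (lam j)
      · refine ⟨|c| + mm + ∑ k, lam k, fun ω => ?_⟩
        have h1 := (hT_bound ω).1
        have h2 := (hT_bound ω).2
        have h3 := ind_nonneg A ω
        have h4 := ind_le_one A ω
        have h5 := le_abs_self c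
        have h6 := neg_abs_le c
        have hX0val : X0 ω = c + mm * ind A ω - ∑ k, lam k * ind (B k) ω := by
          rw [hX0def]
        rw [hX0val, abs_le]
        constructor <;> nlinarith
    · intro j
      rw [hXdef]
      simp only [Fin.cons_succ]
      exact ⟨measurable_const.indicator (hB j), 1, fun ω => by
        rw [abs_of_nonneg (ind_nonneg _ ω)]; exact ind_le_one _ ω⟩
  have hl01 : ∀ k, 0 ≤ l k ∧ l k ≤ 1 := by
    intro k
    refine Fin.cases ?_ ?_ k
    · rw [hldef]
      simp only [Fin.cons_zero]
      constructor
      · positivity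
      · rw [div_le_one hSpos]; linarith
    · intro j
      rw [hldef]
      simp only [Fin.cons_succ]
      constructor
      · exact div_nonneg (hlam j) hSpos.le
      · rw [div_le_one hSpos]
        linarith [hlam_le j]
  have hlsum : (∑ k, l k) = 1 := by
    rw [hldef, Fin.sum_univ_succ]
    simp only [Fin.cons_zero, Fin.cons_succ]
    rw [← Finset.sum_div, ← add_div, div_eq_one_iff_eq hSpos.ne']
    rw [hS]; ring
  have hmix : ∀ ω, (∑ k, l k * X k ω) = ((c + mm) / S) * ind A ω + (c / S) * ind Aᶜ ω := by
    intro ω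
    rw [hldef, hXdef, Fin.sum_univ_succ]
    simp only [Fin.cons_zero, Fin.cons_succ]
    have hsum2 : ∑ j : Fin K, lam j / S * ind (B j) ω
        = (∑ j, lam j * ind (B j) ω) / S := by
      rw [Finset.sum_div]
      exact Finset.sum_congr rfl fun j _ => by ring
    rw [hsum2, hX0def]
    by_cases h : ω ∈ A
    · rw [ind_mem h, ind_not_mem (by simp [h] : ω ∉ Aᶜ)]
      simp only
      rw [ind_mem h]
      field_simp
      try ring
    · rw [ind_not_mem h, ind_mem (by simp [h] : ω ∈ Aᶜ)]
      simp only
      rw [ind_not_mem h]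
      field_simp
      try ring
  have hkey := hRHS (K + 1) (by omega) X l hXbdd hl01 hlsum A ((c + mm) / S) (c / S) hA
    hmix 1 one_pos le_rfl
  -- evaluate both sides
  have hyx : c / S ≤ (c + mm) / S := by
    rw [div_le_div_iff₀ hSpos hSpos]
    nlinarith
  have hRHSval : ∫ β in (0:ℝ)..1, capQuantile ν (fun ω => ∑ k, l k * X k ω) β
      = (c / S) * (1 - ν A) + ((c + mm) / S) * ν A :=
    binary_quantile_integral hν0 hν1 (hνnonneg hA) (hνle1 hA) hmix hyx
  have hE0 : 0 ≤ ∫ β in (0:ℝ)..1, capQuantile ν X0 β := quantile_integral_nonneg hν1 hX0nn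
  have hLHSval : (∑ k, l k * ∫ β in (0:ℝ)..1, capQuantile ν (X k) β)
      = (1 / S) * (∫ β in (0:ℝ)..1, capQuantile ν X0 β) + ∑ j, (lam j / S) * ν (B j) := by
    rw [hldef, hXdef, Fin.sum_univ_succ]
    simp only [Fin.cons_zero, Fin.cons_succ]
    congr 1
    refine Finset.sum_congr rfl fun j _ => ?_
    rw [indicator_quantile_integral hν0 hν1 (hνnonneg (hB j)) (hνle1 (hB j))]
  rw [hLHSval, hRHSval] at hkey
  set E0 : ℝ := ∫ β in (0:ℝ)..1, capQuantile ν X0 β with hE0def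
  set T : ℝ := ∑ j, lam j * ν (B j) with hTdef
  have key2 : (E0 + T) / S ≤ (c * (1 - ν A) + (c + mm) * ν A) / S := by
    have hsum3 : (∑ j, lam j / S * ν (B j)) = T / S := by
      rw [hTdef, Finset.sum_div]
      exact Finset.sum_congr rfl fun j _ => by ring
    rw [hsum3] at hkey
    calc (E0 + T) / S = 1 / S * E0 + T / S := by ring
      _ ≤ c / S * (1 - ν A) + (c + mm) / S * ν A := hkey
      _ = (c * (1 - ν A) + (c + mm) * ν A) / S := by ring
  rw [div_le_div_iff₀ hSpos hSpos] at key2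
  have key3 : E0 + T ≤ c * (1 - ν A) + (c + mm) * ν A :=
    le_of_mul_le_mul_right key2 hSpos
  rw [hTdef] at key3
  nlinarith

end backward

section hahn
variable [F : MeasurableSpace Ω]

/-- The submodule of bounded measurable functions. -/
def bddMeasSub (F : MeasurableSpace Ω) : Submodule ℝ (Ω → ℝ) where
  carrier := {X | BddMeas F X}
  add_mem' := by
    intro X Y hX hY
    obtain ⟨hXm, MX, hMX⟩ := hX
    obtain ⟨hYm, MY, hMY⟩ := hY
    exact ⟨hXm.add hYm, MX + MY, fun ω => (abs_add_le _ _).trans (add_le_add (hMX ω) (hMY ω))⟩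
  zero_mem' := ⟨measurable_const, 0, fun ω => by simp⟩
  smul_mem' := by
    intro r X hX
    obtain ⟨hXm, MX, hMX⟩ := hX
    refine ⟨hXm.const_mul r, |r| * MX, fun ω => ?_⟩
    have h : (r • X) ω = r * X ω := rfl
    rw [h, abs_mul]
    exact mul_le_mul_of_nonneg_left (hMX ω) (abs_nonneg r)

/-- representation set used to define the sublinear majorant -/
def repSet (ν : Set Ω → ℝ) (A : Set Ω) (X : Ω → ℝ) : Set ℝ :=
  { r | ∃ (K : ℕ) (lam : Fin K → ℝ) (B : Fin K → Set Ω) (mm c : ℝ),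
      (∀ k, 0 ≤ lam k) ∧ (∀ k, MeasurableSet (B k)) ∧ 0 ≤ mm ∧
      (∀ ω, X ω ≤ c + mm * ind A ω - ∑ k, lam k * ind (B k) ω) ∧
      r = c + mm * ν A - ∑ k, lam k * ν (B k) }

variable {ν : Set Ω → ℝ} {A : Set Ω}

lemma repSet_nonempty {X : Ω → ℝ} {MX : ℝ} (hXb : ∀ ω, X ω ≤ MX) :
    (repSet (F := F) ν A X).Nonempty := by
  refine ⟨MX + 0 * ν A - ∑ k : Fin 0, 0 * ν ∅,
    0, fun _ => 0, fun _ => ∅, 0, MX, fun k => le_rfl, fun k => MeasurableSet.empty,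
    le_rfl, ?_, rfl⟩
  intro ω
  simp only [Finset.univ_eq_empty, Finset.sum_empty, zero_mul]
  have h3 := ind_nonneg A ω
  linarith [hXb ω]

lemma repSet_lb
    (hstar : ∀ {K : ℕ} (lam : Fin K → ℝ) (B : Fin K → Set Ω), (∀ k, 0 ≤ lam k) →
      (∀ k, MeasurableSet (B k)) → ∀ {mm c : ℝ}, 0 ≤ mm →
      (∀ ω, (∑ k, lam k * ind (B k) ω) ≤ c + mm * ind A ω) →
      (∑ k, lam k * ν (B k)) ≤ c + mm * ν A)
    {X : Ω → ℝ} {MX : ℝ} (hXb : ∀ ω, -MX ≤ X ω) :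
    ∀ r ∈ repSet (F := F) ν A X, -MX ≤ r := by
  rintro r ⟨K, lam, B, mm, c, hlam, hB, hmm, hdom, hval⟩
  have h := hstar lam B hlam hB hmm (c := c + MX) (fun ω => by linarith [hdom ω, hXb ω])
  rw [hval]; linarith

lemma repSet_smul {X : Ω → ℝ} {co : ℝ} (hco : 0 < co) :
    repSet (F := F) ν A (co • X) = (fun r => co * r) '' repSet (F := F) ν A X := by
  ext r
  constructor
  · rintro ⟨K, lam, B, mm, c, hlam, hB, hmm, hdom, hval⟩
    refine ⟨r / co, ⟨K, fun k => lam k / co, B, mm / co, c / co,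
      fun k => div_nonneg (hlam k) hco.le, hB, div_nonneg hmm hco.le, ?_, ?_⟩,
      by field_simp⟩
    · intro ω
      have h1 := hdom ω
      have h2 : (co • X) ω = co * X ω := rfl
      rw [h2] at h1
      have hsum : ∑ k, lam k / co * ind (B k) ω = (∑ k, lam k * ind (B k) ω) / co := by
        rw [Finset.sum_div]; exact Finset.sum_congr rfl fun k _ => by ring
      rw [hsum]
      have h3 : X ω ≤ (c + mm * ind A ω - ∑ k, lam k * ind (B k) ω) / co := by
        rw [le_div_iff₀ hco]
        nlinarith
      calc X ω ≤ (c + mm * ind A ω - ∑ k, lam k * ind (B k) ω) / co := h3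
        _ = c / co + mm / co * ind A ω - (∑ k, lam k * ind (B k) ω) / co := by ring
    · have hsum : ∑ k, lam k / co * ν (B k) = (∑ k, lam k * ν (B k)) / co := by
        rw [Finset.sum_div]; exact Finset.sum_congr rfl fun k _ => by ring
      rw [hsum, hval]
      ring
  · rintro ⟨r0, ⟨K, lam, B, mm, c, hlam, hB, hmm, hdom, hval⟩, rfl⟩
    refine ⟨K, fun k => co * lam k, B, co * mm, co * c,
      fun k => mul_nonneg hco.le (hlam k), hB, mul_nonneg hco.le hmm, ?_, ?_⟩
    · intro ω
      have h1 := hdom ω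
      have h2 : (co • X) ω = co * X ω := rfl
      rw [h2]
      have hsum : ∑ k, co * lam k * ind (B k) ω = co * ∑ k, lam k * ind (B k) ω := by
        rw [Finset.mul_sum]; exact Finset.sum_congr rfl fun k _ => by ring
      rw [hsum]
      nlinarith
    · have hsum : ∑ k, co * lam k * ν (B k) = co * ∑ k, lam k * ν (B k) := by
        rw [Finset.mul_sum]; exact Finset.sum_congr rfl fun k _ => by ring
      rw [hsum, hval]
      ring

lemma repSet_add {X Y : Ω → ℝ} {r1 r2 : ℝ}
    (h1 : r1 ∈ repSet (F := F) ν A X) (h2 : r2 ∈ repSet (F := F) ν A Y) :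
    r1 + r2 ∈ repSet (F := F) ν A (X + Y) := by
  obtain ⟨K1, lam1, B1, m1, c1, hl1, hB1, hm1, hd1, hv1⟩ := h1
  obtain ⟨K2, lam2, B2, m2, c2, hl2, hB2, hm2, hd2, hv2⟩ := h2
  refine ⟨K1 + K2, Fin.append lam1 lam2, Fin.append B1 B2, m1 + m2, c1 + c2,
    ?_, ?_, by linarith, ?_, ?_⟩
  · intro k
    refine Fin.addCases (fun i => ?_) (fun i => ?_) k
    · rw [Fin.append_left]; exact hl1 i
    · rw [Fin.append_right]; exact hl2 i
  · intro k
    refine Fin.addCases (fun i => ?_) (fun i => ?_) k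
    · rw [Fin.append_left]; exact hB1 i
    · rw [Fin.append_right]; exact hB2 i
  · intro ω
    have hsum : ∑ k, Fin.append lam1 lam2 k * ind (Fin.append B1 B2 k) ω
        = (∑ k, lam1 k * ind (B1 k) ω) + ∑ k, lam2 k * ind (B2 k) ω := by
      rw [Fin.sum_univ_add]
      congr 1
      · exact Finset.sum_congr rfl fun i _ => by rw [Fin.append_left, Fin.append_left]
      · exact Finset.sum_congr rfl fun i _ => by rw [Fin.append_right, Fin.append_right]
    rw [hsum]
    have hXY : (X + Y) ω = X ω + Y ω := rfl
    rw [hXY]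
    linarith [hd1 ω, hd2 ω]
  · have hsum : ∑ k, Fin.append lam1 lam2 k * ν (Fin.append B1 B2 k)
        = (∑ k, lam1 k * ν (B1 k)) + ∑ k, lam2 k * ν (B2 k) := by
      rw [Fin.sum_univ_add]
      congr 1
      · exact Finset.sum_congr rfl fun i _ => by rw [Fin.append_left, Fin.append_left]
      · exact Finset.sum_congr rfl fun i _ => by rw [Fin.append_right, Fin.append_right]
    rw [hsum, hv1, hv2]
    ring

end hahn

section core
variable [F : MeasurableSpace Ω]

set_option maxHeartbeats 1000000 in
lemma core_element {ν : Set Ω → ℝ}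
    (hν0 : ν ∅ = 0) (hν1 : ν Set.univ = 1)
    (hνmono : ∀ B C : Set Ω, MeasurableSet B → MeasurableSet C → B ⊆ C → ν B ≤ ν C)
    (hcontUp : ∀ As : ℕ → Set Ω, (∀ n, MeasurableSet (As n)) → Monotone As →
      Filter.Tendsto (fun n => ν (As n)) Filter.atTop (nhds (ν (⋃ n, As n))))
    {A : Set Ω} (hA : MeasurableSet A)
    (hstar : ∀ {K : ℕ} (lam : Fin K → ℝ) (B : Fin K → Set Ω), (∀ k, 0 ≤ lam k) →
      (∀ k, MeasurableSet (B k)) → ∀ {mm c : ℝ}, 0 ≤ mm →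
      (∀ ω, (∑ k, lam k * ind (B k) ω) ≤ c + mm * ind A ω) →
      (∑ k, lam k * ν (B k)) ≤ c + mm * ν A) :
    ∃ μ : Measure Ω, IsProbabilityMeasure μ ∧
      (∀ B : Set Ω, MeasurableSet B → ν B ≤ (μ B).toReal) ∧ (μ A).toReal = ν A := by
  have hνnonneg : ∀ {C : Set Ω}, MeasurableSet C → 0 ≤ ν C := by
    intro C hC
    have := hνmono ∅ C MeasurableSet.empty hC (Set.empty_subset C)
    rw [hν0] at this; exact this
  set V := bddMeasSub F with hV
  set N : ↥V → ℝ := fun X => sInf (repSet (F := F) ν A X.1) with hN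
  -- basic properties of N
  have hbound : ∀ X : ↥V, ∃ MX : ℝ, ∀ ω, |X.1 ω| ≤ MX := fun X => X.2.2
  have hNE : ∀ X : ↥V, (repSet (F := F) ν A X.1).Nonempty := by
    intro X
    obtain ⟨MX, hMX⟩ := hbound X
    exact repSet_nonempty fun ω => (abs_le.1 (hMX ω)).2
  have hBB : ∀ X : ↥V, BddBelow (repSet (F := F) ν A X.1) := by
    intro X
    obtain ⟨MX, hMX⟩ := hbound X
    exact ⟨-MX, fun r hr => repSet_lb hstar (fun ω => (abs_le.1 (hMX ω)).1) r hr⟩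
  have hNle : ∀ (X : ↥V) (r : ℝ), r ∈ repSet (F := F) ν A X.1 → N X ≤ r :=
    fun X r hr => csInf_le (hBB X) hr
  have hNge : ∀ (X : ↥V) (MX : ℝ), (∀ ω, -MX ≤ X.1 ω) → -MX ≤ N X :=
    fun X MX h => le_csInf (hNE X) fun r hr => repSet_lb hstar h r hr
  -- sublinearity
  have N_hom : ∀ c : ℝ, 0 < c → ∀ X : ↥V, N (c • X) = c * N X := by
    intro c hc X
    have hcoe : (c • X).1 = c • X.1 := rfl
    rw [hN]
    simp only
    rw [hcoe, repSet_smul hc]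
    have himg : (fun r => c * r) '' repSet (F := F) ν A X.1
        = c • (repSet (F := F) ν A X.1) := by
      ext r
      simp only [Set.mem_image, Set.mem_smul_set, smul_eq_mul]
    rw [himg, Real.sInf_smul_of_nonneg hc.le, smul_eq_mul]
  have N_add : ∀ X Y : ↥V, N (X + Y) ≤ N X + N Y := by
    intro X Y
    have hmem : ∀ r1 ∈ repSet (F := F) ν A X.1, ∀ r2 ∈ repSet (F := F) ν A Y.1,
        N (X + Y) ≤ r1 + r2 := by
      intro r1 h1 r2 h2
      refine hNle _ _ ?_
      have hcoe : (X + Y).1 = X.1 + Y.1 := rfl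
      rw [hcoe]
      exact repSet_add h1 h2
    have h2 : ∀ r1 ∈ repSet (F := F) ν A X.1, N (X + Y) - r1 ≤ N Y := by
      intro r1 h1
      exact le_csInf (hNE Y) fun r2 h2 => by linarith [hmem r1 h1 r2 h2]
    have h3 : N (X + Y) - N Y ≤ N X :=
      le_csInf (hNE X) fun r1 h1 => by linarith [h2 r1 h1]
    linarith
  -- Hahn-Banach extension of the zero map on the trivial subspace
  have hf : ∀ x : (⟨⊥, 0⟩ : (↥V) →ₗ.[ℝ] ℝ).domain,
      (⟨⊥, 0⟩ : (↥V) →ₗ.[ℝ] ℝ) x ≤ N x := by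
    intro x
    have hx : (x : ↥V) = 0 := (Submodule.mem_bot ℝ).1 x.2
    have h0 : (⟨⊥, 0⟩ : (↥V) →ₗ.[ℝ] ℝ) x = 0 := rfl
    rw [h0, hx]
    have : -(0:ℝ) ≤ N 0 := hNge 0 0 (fun ω => by norm_num [hV])
    linarith
  obtain ⟨gL, hgext, hgle⟩ :=
    exists_extension_of_le_sublinear (⟨⊥, 0⟩ : (↥V) →ₗ.[ℝ] ℝ) N N_hom N_add hf
  -- indicators as elements of V
  have memInd : ∀ {B : Set Ω}, MeasurableSet B → ind B ∈ V := by
    intro B hB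
    exact ⟨measurable_const.indicator hB, 1, fun ω => by
      rw [abs_of_nonneg (ind_nonneg _ ω)]; exact ind_le_one _ ω⟩
  set ge : Set Ω → ℝ := fun B =>
    if hB : MeasurableSet B then gL ⟨ind B, memInd hB⟩ else 0 with hge
  have ge_eq : ∀ {B : Set Ω} (hB : MeasurableSet B), ge B = gL ⟨ind B, memInd hB⟩ :=
    fun {B} hB => dif_pos hB
  -- ν B ≤ ge B
  have ge_ge : ∀ {B : Set Ω} (hB : MeasurableSet B), ν B ≤ ge B := by
    intro B hB
    have hmem : (0 + 0 * ν A - ∑ _k : Fin 1, 1 * ν B)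
        ∈ repSet (F := F) ν A ((-(⟨ind B, memInd hB⟩ : ↥V)).1) := by
      refine ⟨1, fun _ => 1, fun _ => B, 0, 0, fun _ => zero_le_one, fun _ => hB,
        le_rfl, ?_, rfl⟩
      intro ω
      have hco : ((-(⟨ind B, memInd hB⟩ : ↥V)).1) ω = -(ind B ω) := rfl
      rw [hco]
      simp [Fin.sum_univ_one]
    have h1 : gL (-(⟨ind B, memInd hB⟩ : ↥V)) ≤ 0 + 0 * ν A - ∑ _k : Fin 1, 1 * ν B :=
      le_trans (hgle _) (hNle _ _ hmem)
    rw [map_neg] at h1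
    have h2 : (0:ℝ) + 0 * ν A - ∑ _k : Fin 1, 1 * ν B = -ν B := by simp
    rw [h2] at h1
    rw [ge_eq hB]
    linarith
  -- ge A ≤ ν A
  have ge_A_le : ge A ≤ ν A := by
    have hmem : (0 + 1 * ν A - ∑ _k : Fin 0, 0 * ν ∅)
        ∈ repSet (F := F) ν A ((⟨ind A, memInd hA⟩ : ↥V).1) := by
      refine ⟨0, fun _ => 0, fun _ => ∅, 1, 0, fun k => le_rfl,
        fun k => MeasurableSet.empty, zero_le_one, ?_, rfl⟩
      intro ω
      simp
    have h1 : gL ⟨ind A, memInd hA⟩ ≤ 0 + 1 * ν A - ∑ _k : Fin 0, 0 * ν ∅ :=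
      le_trans (hgle _) (hNle _ _ hmem)
    rw [ge_eq hA]
    simpa using h1
  have ge_A : ge A = ν A := le_antisymm ge_A_le (ge_ge hA)
  -- ge univ ≤ 1
  have ge_univ_le : ge Set.univ ≤ 1 := by
    have hmem : (1 + 0 * ν A - ∑ _k : Fin 0, 0 * ν ∅)
        ∈ repSet (F := F) ν A ((⟨ind Set.univ, memInd MeasurableSet.univ⟩ : ↥V).1) := by
      refine ⟨0, fun _ => 0, fun _ => ∅, 0, 1, fun k => le_rfl,
        fun k => MeasurableSet.empty, le_rfl, ?_, rfl⟩
      intro ω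
      have := ind_le_one (Set.univ : Set Ω) ω
      have := ind_nonneg A ω
      simp only [Finset.univ_eq_empty, Finset.sum_empty, zero_mul]
      linarith
    have h1 := le_trans (hgle _) (hNle _ _ hmem)
    rw [ge_eq MeasurableSet.univ]
    simpa using h1
  have ge_univ : ge Set.univ = 1 := by
    refine le_antisymm ge_univ_le ?_
    rw [← hν1]
    exact ge_ge MeasurableSet.univ
  -- finite additivity
  have ge_add : ∀ {B C : Set Ω}, MeasurableSet B → MeasurableSet C → Disjoint B C →
      ge (B ∪ C) = ge B + ge C := by
    intro B C hB hC hdisj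
    have hind : ind (B ∪ C) = ind B + ind C := by
      funext ω
      by_cases hb : ω ∈ B
      · have hc : ω ∉ C := Set.disjoint_left.1 hdisj hb
        have h1 : ω ∈ B ∪ C := Or.inl hb
        show ind (B ∪ C) ω = ind B ω + ind C ω
        rw [ind_mem h1, ind_mem hb, ind_not_mem hc]; ring
      · by_cases hc : ω ∈ C
        · have h1 : ω ∈ B ∪ C := Or.inr hc
          show ind (B ∪ C) ω = ind B ω + ind C ω
          rw [ind_mem h1, ind_not_mem hb, ind_mem hc]; ring
        · have h1 : ω ∉ B ∪ C := fun h => h.elim hb hc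
          show ind (B ∪ C) ω = ind B ω + ind C ω
          rw [ind_not_mem h1, ind_not_mem hb, ind_not_mem hc]; ring
    have hsub : (⟨ind (B ∪ C), memInd (hB.union hC)⟩ : ↥V)
        = ⟨ind B, memInd hB⟩ + ⟨ind C, memInd hC⟩ := by
      apply Subtype.ext
      exact hind
    rw [ge_eq (hB.union hC), ge_eq hB, ge_eq hC, hsub, map_add]
  have ge_compl : ∀ {B : Set Ω}, MeasurableSet B → ge Bᶜ = 1 - ge B := by
    intro B hB
    have h1 : (B ∪ Bᶜ) = Set.univ := Set.union_compl_self B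
    have h2 := ge_add hB hB.compl disjoint_compl_right
    rw [h1, ge_univ] at h2
    linarith
  have ge_nonneg : ∀ {B : Set Ω}, MeasurableSet B → 0 ≤ ge B :=
    fun {B} hB => le_trans (hνnonneg hB) (ge_ge hB)
  have main_sigma : ∀ (f : ℕ → Set Ω), (∀ i, MeasurableSet (f i)) →
      Pairwise (Function.onFun Disjoint f) →
      HasSum (fun i => ge (f i)) (ge (⋃ i, f i)) := by
    intro f hf hdisj
    set U : Set Ω := ⋃ i, f i with hU
    set T : ℕ → Set Ω := fun Nn => ⋃ (i : ℕ) (_ : Nn ≤ i), f i with hT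
    have hTmeas : ∀ Nn, MeasurableSet (T Nn) := fun Nn =>
      MeasurableSet.iUnion fun i => MeasurableSet.iUnion fun _ => hf i
    have hT0 : T 0 = U := by
      rw [hT, hU]
      ext ω; simp
    have hTsucc : ∀ Nn, T Nn = f Nn ∪ T (Nn + 1) := by
      intro Nn
      ext ω
      simp only [hT, Set.mem_iUnion, Set.mem_union]
      constructor
      · rintro ⟨i, hi, hωi⟩
        rcases eq_or_lt_of_le hi with he | hlt
        · left; rw [he]; exact hωi
        · right; exact ⟨i, hlt, hωi⟩
      · rintro (h | ⟨i, hi, hωi⟩)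
        · exact ⟨Nn, le_rfl, h⟩
        · exact ⟨i, by omega, hωi⟩
    have hdisjT : ∀ Nn, Disjoint (f Nn) (T (Nn + 1)) := by
      intro Nn
      rw [Set.disjoint_left]
      intro ω hω hωT
      simp only [hT, Set.mem_iUnion] at hωT
      obtain ⟨i, hi, hωi⟩ := hωT
      have hne : Nn ≠ i := by omega
      exact Set.disjoint_left.1 (hdisj hne) hω hωi
    have hpartial : ∀ Nn, ge U = (∑ i ∈ Finset.range Nn, ge (f i)) + ge (T Nn) := by
      intro Nn
      induction Nn with
      | zero => simp [hT0]
      | succ k ih =>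
        rw [ih, Finset.sum_range_succ]
        have h2 := ge_add (hf k) (hTmeas (k + 1)) (hdisjT k)
        rw [← hTsucc k] at h2
        rw [h2]
        ring
    have hTanti : Antitone T := by
      refine antitone_nat_of_succ_le fun Nn => ?_
      rw [hTsucc Nn]
      exact Set.subset_union_right
    have hTiInter : (⋂ Nn, T Nn) = ∅ := by
      ext ω
      simp only [Set.mem_iInter, Set.mem_empty_iff_false, iff_false, not_forall]
      by_contra hc
      push_neg at hc
      have h0 : ω ∈ T 0 := hc 0
      simp only [hT, Set.mem_iUnion] at h0
      obtain ⟨i, _, hωi⟩ := h0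
      have h1 : ω ∈ T (i + 1) := hc (i + 1)
      simp only [hT, Set.mem_iUnion] at h1
      obtain ⟨j, hj, hωj⟩ := h1
      have hne : i ≠ j := by omega
      exact Set.disjoint_left.1 (hdisj hne) hωi hωj
    have hcuniv : (⋃ Nn, (T Nn)ᶜ) = Set.univ := by
      rw [← Set.compl_iInter, hTiInter, Set.compl_empty]
    have hcont := hcontUp (fun Nn => (T Nn)ᶜ) (fun Nn => (hTmeas Nn).compl)
      (fun a b hab => Set.compl_subset_compl.2 (hTanti hab))
    rw [hcuniv, hν1] at hcont
    have hub : ∀ Nn, ge (T Nn) ≤ 1 - ν ((T Nn)ᶜ) := by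
      intro Nn
      have h2 := ge_compl (hTmeas Nn)
      have h3 := ge_ge (hTmeas Nn).compl
      linarith
    have hlb : ∀ Nn, 0 ≤ ge (T Nn) := fun Nn => ge_nonneg (hTmeas Nn)
    have htail : Tendsto (fun Nn => ge (T Nn)) atTop (𝓝 0) := by
      have hupper : Tendsto (fun Nn => 1 - ν ((T Nn)ᶜ)) atTop (𝓝 (1 - 1)) :=
        tendsto_const_nhds.sub hcont
      rw [sub_self] at hupper
      exact tendsto_of_tendsto_of_tendsto_of_le_of_le tendsto_const_nhds hupper hlb hub
    have hsums : Tendsto (fun Nn => ∑ i ∈ Finset.range Nn, ge (f i)) atTop (𝓝 (ge U)) := by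
      have heq2 : (fun Nn => ∑ i ∈ Finset.range Nn, ge (f i))
          = fun Nn => ge U - ge (T Nn) := by
        funext Nn; linarith [hpartial Nn]
      rw [heq2]
      have h4 : Tendsto (fun Nn => ge U - ge (T Nn)) atTop (𝓝 (ge U - 0)) :=
        tendsto_const_nhds.sub htail
      simpa using h4
    exact (hasSum_iff_tendsto_nat_of_nonneg (fun i => ge_nonneg (hf i)) _).2 hsums
  have h0' : (fun s (_ : MeasurableSet s) => ENNReal.ofReal (ge s)) ∅ MeasurableSet.empty
      = 0 := by
    have hzero : (⟨ind ∅, memInd MeasurableSet.empty⟩ : ↥V) = 0 := by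
      apply Subtype.ext
      funext ω
      show ind ∅ ω = 0
      exact ind_not_mem (Set.notMem_empty ω)
    have hgeEmpty : ge ∅ = 0 := by rw [ge_eq MeasurableSet.empty, hzero, map_zero]
    simp [hgeEmpty]
  have hσ : ∀ ⦃f : ℕ → Set Ω⦄ (h : ∀ i, MeasurableSet (f i)),
      Pairwise (Function.onFun Disjoint f) →
      (fun s (_ : MeasurableSet s) => ENNReal.ofReal (ge s)) (⋃ i, f i)
        (MeasurableSet.iUnion h)
      = ∑' i, (fun s (_ : MeasurableSet s) => ENNReal.ofReal (ge s)) (f i) (h i) := by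
    intro f hf hdisj
    have hhs := main_sigma f hf hdisj
    simp only
    rw [← hhs.tsum_eq]
    exact ENNReal.ofReal_tsum_of_nonneg (fun i => ge_nonneg (hf i)) hhs.summable
  set μ : Measure Ω := Measure.ofMeasurable
    (fun s (_ : MeasurableSet s) => ENNReal.ofReal (ge s)) h0' hσ with hμ
  have happ : ∀ {B : Set Ω}, MeasurableSet B → μ B = ENNReal.ofReal (ge B) :=
    fun {B} hB => Measure.ofMeasurable_apply B hB
  have htoReal : ∀ {B : Set Ω}, MeasurableSet B → (μ B).toReal = ge B := by
    intro B hB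
    rw [happ hB, ENNReal.toReal_ofReal (ge_nonneg hB)]
  refine ⟨μ, ⟨?_⟩, ?_, ?_⟩
  · rw [happ MeasurableSet.univ, ge_univ, ENNReal.ofReal_one]
  · intro B hB
    rw [htoReal hB]
    exact ge_ge hB
  · rw [htoReal hA, ge_A]

end core

end Stmt15Aux

/-- a continuous capacity is exact iff the Choquet
act-to-distribution mapping satisfies the integrated-quantile (second-order
stochastic dominance) inequality for all mixtures that equal a binary act
(Proposition `prop:weakerDiv`). -/
theorem stmt15 {Ω : Type*} [F : MeasurableSpace Ω] (ν : Set Ω → ℝ)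
    (hν : IsContinuousCapacity F ν) :
    ExactCapacity F ν ↔
    (∀ n : ℕ, 1 ≤ n → ∀ (X : Fin n → Ω → ℝ) (l : Fin n → ℝ),
      (∀ k, BddMeas F (X k)) → (∀ k, 0 ≤ l k ∧ l k ≤ 1) → (∑ k, l k) = 1 →
      ∀ (A : Set Ω) (x y : ℝ), MeasurableSet A →
        (∀ ω, (∑ k, l k * X k ω) = x * ind A ω + y * ind Aᶜ ω) →
        ∀ α : ℝ, 0 < α → α ≤ 1 →
          (∑ k, l k * ∫ β in (0:ℝ)..α, capQuantile ν (X k) β) ≤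
          ∫ β in (0:ℝ)..α, capQuantile ν (fun ω => ∑ k, l k * X k ω) β) :=  by
  obtain ⟨hcap, hcontUp, hcontDown⟩ := hν
  constructor
  · intro hex n hn X l hX hl hsum A x y hA hZ α hα0 hα1
    rcases le_total y x with hyx | hxy
    · exact Stmt15Aux.forward_main hcap hex X l hX hl hA hZ hyx hα0 hα1
    · have hZ' : ∀ ω, (∑ k, l k * X k ω) = y * ind Aᶜ ω + x * ind Aᶜᶜ ω := by
        intro ω
        rw [hZ ω, compl_compl]
        ring
      exact Stmt15Aux.forward_main hcap hex X l hX hl hA.compl hZ' hxy hα0 hα1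
  · intro hRHS A hA
    apply Stmt15Aux.core_element hcap.1 hcap.2.1 hcap.2.2 hcontUp hA
    intro K lam B hlam hB mm c hmm hdom
    exact Stmt15Aux.star_ineq hcap hRHS hA lam B hlam hB hmm hdom


end
end

section
/- Let ν be a continuous capacity on a measurable space (Ω, F), let (Zₙ) be a uniformly bounded sequence of bounded measurable functions Ω → ℝ converging pointwise to a bounded measurable Z : Ω → ℝ. Then for every x ∈ ℝ at which the function t ↦ ν({Z > t}) is continuous, ν({Zₙ > x}) → ν({Z > x}) as n → ∞. (Equivalently, the distributions 𝔇_ν(Zₙ) converge weakly to 𝔇_ν(Z).) -/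
open MeasureTheory Filter Topology

noncomputable section

/-- continuity of a continuous capacity along uniformly bounded
pointwise convergent sequences, at continuity points of the limit's survival
function (Lemma `lem:con`). -/
theorem stmt16 {Ω : Type*} [F : MeasurableSpace Ω] (ν : Set Ω → ℝ)
    (hν : IsContinuousCapacity F ν) (Zn : ℕ → Ω → ℝ) (Z : Ω → ℝ)
    (hZn : ∀ n, BddMeas F (Zn n)) (hZ : BddMeas F Z)
    (hub : ∃ M : ℝ, ∀ n ω, |Zn n ω| ≤ M)
    (hlim : ∀ ω, Filter.Tendsto (fun n => Zn n ω) Filter.atTop (nhds (Z ω)))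
    (x : ℝ) (hx : ContinuousAt (fun t => ν {ω | t < Z ω}) x) :
    Filter.Tendsto (fun n => ν {ω | x < Zn n ω}) Filter.atTop (nhds (ν {ω | x < Z ω})) := by
  obtain ⟨⟨hν0, hν1, hmono⟩, hup, hdown⟩ := hν
  have hmZn : ∀ n, MeasurableSet {ω | x < Zn n ω} := fun n =>
    measurableSet_lt measurable_const (hZn n).1
  have hmZ : MeasurableSet {ω | x < Z ω} := measurableSet_lt measurable_const hZ.1
  have hmZge : MeasurableSet {ω | x ≤ Z ω} := measurableSet_le measurable_const hZ.1
  set v := ν {ω | x < Z ω} with hv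
  set A : ℕ → Set Ω := fun N => ⋂ n, ⋂ (_ : N ≤ n), {ω | x < Zn n ω} with hA
  set B : ℕ → Set Ω := fun N => ⋃ n, ⋃ (_ : N ≤ n), {ω | x < Zn n ω} with hB
  have hmA : ∀ N, MeasurableSet (A N) := fun N =>
    MeasurableSet.iInter fun n => MeasurableSet.iInter fun _ => hmZn n
  have hmB : ∀ N, MeasurableSet (B N) := fun N =>
    MeasurableSet.iUnion fun n => MeasurableSet.iUnion fun _ => hmZn n
  have hAmono : Monotone A := by
    intro N M hNM ω hω
    simp only [hA, Set.mem_iInter] at hω ⊢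
    exact fun n hn => hω n (hNM.trans hn)
  have hBanti : Antitone B := by
    intro N M hNM ω hω
    simp only [hB, Set.mem_iUnion] at hω ⊢
    obtain ⟨n, hn, h⟩ := hω
    exact ⟨n, hNM.trans hn, h⟩
  -- {Z > x} ⊆ ⋃ A and {Z > x} ⊆ B N for each N
  have hev : ∀ ω, x < Z ω → ∀ᶠ n in atTop, x < Zn n ω := fun ω hω =>
    (hlim ω).eventually (eventually_gt_nhds hω)
  have hsub1 : {ω | x < Z ω} ⊆ ⋃ N, A N := by
    intro ω hω
    obtain ⟨N, hN⟩ := (hev ω hω).exists_forall_of_atTop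
    exact Set.mem_iUnion.2 ⟨N, Set.mem_iInter.2 fun n =>
      Set.mem_iInter.2 fun hn => hN n hn⟩
  have hsub2 : ∀ N, {ω | x < Z ω} ⊆ B N := by
    intro N ω hω
    obtain ⟨n, hn, h⟩ := ((hev ω hω).and (eventually_ge_atTop N)).exists
    exact Set.mem_iUnion.2 ⟨n, Set.mem_iUnion.2 ⟨h, hn⟩⟩
  -- both ⊆ {Z ≥ x}
  have hsub3 : (⋃ N, A N) ⊆ {ω | x ≤ Z ω} := by
    intro ω hω
    obtain ⟨N, hN⟩ := Set.mem_iUnion.1 hω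
    simp only [hA, Set.mem_iInter] at hN
    refine ge_of_tendsto (hlim ω) ?_
    filter_upwards [eventually_ge_atTop N] with n hn
    exact (hN n hn).le
  have hsub4 : (⋂ N, B N) ⊆ {ω | x ≤ Z ω} := by
    intro ω hω
    simp only [Set.mem_iInter, hB, Set.mem_iUnion] at hω
    have hfreq : ∃ᶠ n in atTop, x < Zn n ω := by
      rw [frequently_atTop]
      intro N
      obtain ⟨n, hn, h⟩ := hω N
      exact ⟨n, hn, h⟩
    simp only [Set.mem_setOf_eq]
    by_contra hlt
    push_neg at hlt
    have hev' : ∀ᶠ n in atTop, Zn n ω < x := (hlim ω).eventually (eventually_lt_nhds hlt)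
    obtain ⟨n, h1, h2⟩ := (hfreq.and_eventually hev').exists
    linarith
  -- ν {Z ≥ x} ≤ v using continuity at x
  have hkey : ν {ω | x ≤ Z ω} ≤ v := by
    have hseq : Tendsto (fun n : ℕ => x - 1 / (n + 1)) atTop (nhds x) := by
      have := tendsto_one_div_add_atTop_nhds_zero_nat (𝕜 := ℝ)
      simpa using tendsto_const_nhds.sub this
    have h1 : Tendsto (fun n : ℕ => ν {ω | x - 1 / (n + 1) < Z ω}) atTop (nhds v) :=
      hx.tendsto.comp hseq
    refine ge_of_tendsto h1 (Eventually.of_forall fun n => ?_)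
    refine hmono _ _ hmZge (measurableSet_lt measurable_const hZ.1) fun ω hω => ?_
    have hpos : (0 : ℝ) < 1 / ((n : ℝ) + 1) := by positivity
    have h2 : x ≤ Z ω := hω
    show x - 1 / ((n : ℝ) + 1) < Z ω
    linarith
  have hmUA : MeasurableSet (⋃ N, A N) := MeasurableSet.iUnion hmA
  have hmIB : MeasurableSet (⋂ N, B N) := MeasurableSet.iInter hmB
  have hUA : ν (⋃ N, A N) = v :=
    le_antisymm ((hmono _ _ hmUA hmZge hsub3).trans hkey) (hmono _ _ hmZ hmUA hsub1)
  have hIB : ν (⋂ N, B N) = v :=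
    le_antisymm ((hmono _ _ hmIB hmZge hsub4).trans hkey)
      (hmono _ _ hmZ hmIB fun ω hω => Set.mem_iInter.2 fun N => hsub2 N hω)
  have hAlim : Tendsto (fun N => ν (A N)) atTop (nhds v) := hUA ▸ hup A hmA hAmono
  have hBlim : Tendsto (fun N => ν (B N)) atTop (nhds v) := hIB ▸ hdown B hmB hBanti
  refine tendsto_of_tendsto_of_tendsto_of_le_of_le hAlim hBlim ?_ ?_
  · intro n
    refine hmono _ _ (hmA n) (hmZn n) fun ω hω => ?_
    simp only [hA, Set.mem_iInter] at hω
    exact hω n le_rfl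
  · intro n
    refine hmono _ _ (hmZn n) (hmB n) fun ω hω => ?_
    exact Set.mem_iUnion.2 ⟨n, Set.mem_iUnion.2 ⟨le_rfl, hω⟩⟩

end
end

section
/- Let ν be a continuous capacity on a measurable space (Ω, F), let X : Ω → ℝ be bounded measurable, and let α ∈ (0,1). Define g_α : [0,1] → [0,1] by g_α(β) = 1 if β ≥ 1 − α and g_α(β) = 0 otherwise. Then the Choquet integral of X with respect to the distorted capacity A ↦ g_α(ν(A)) equals the ν-quantile of X at level α; that is, ∫₀^∞ g_α(ν({X > x})) dx + ∫_{−∞}^0 (g_α(ν({X > x})) − 1) dx = inf { x ∈ ℝ : ν({X > x}) < 1 − α }. -/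
set_option linter.unnecessarySimpa false


open MeasureTheory Filter Topology

noncomputable section

/-- the Choquet integral with respect to the distorted capacity
`g_α ∘ ν` equals the ν-quantile at level α (Proposition `prop:quant`, first part). -/
theorem stmt17 {Ω : Type*} [F : MeasurableSpace Ω] (ν : Set Ω → ℝ)
    (hν : IsContinuousCapacity F ν) (X : Ω → ℝ) (hX : BddMeas F X)
    (α : ℝ) (hα0 : 0 < α) (hα1 : α < 1) :
    (∫ x in Set.Ioi (0:ℝ), (if 1 - α ≤ ν {ω | x < X ω} then (1:ℝ) else 0)) +
      (∫ x in Set.Iio (0:ℝ), ((if 1 - α ≤ ν {ω | x < X ω} then (1:ℝ) else 0) - 1)) =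
    capQuantile ν X α := by
  obtain ⟨⟨h0, h1, hmono⟩, -, -⟩ := hν
  obtain ⟨hXm, M, hM⟩ := hX
  set S := {x : ℝ | ν {ω | x < X ω} < 1 - α} with hSdef
  set q := sInf S with hqdef
  have hmeas : ∀ x : ℝ, MeasurableSet {ω | x < X ω} := fun x =>
    measurableSet_lt measurable_const hXm
  have hanti : ∀ x y : ℝ, x ≤ y → ν {ω | y < X ω} ≤ ν {ω | x < X ω} := fun x y hxy =>
    hmono _ _ (hmeas y) (hmeas x) (fun ω h => lt_of_le_of_lt hxy h)
  have hSup : ∀ x ∈ S, ∀ y, x ≤ y → y ∈ S := fun x hx y hxy =>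
    lt_of_le_of_lt (hanti x y hxy) hx
  have hMmem : M ∈ S := by
    have he : {ω | M < X ω} = (∅ : Set Ω) := by
      ext ω
      simp only [Set.mem_setOf_eq, Set.mem_empty_iff_false, iff_false, not_lt]
      exact le_trans (le_abs_self _) (hM ω)
    show ν {ω | M < X ω} < 1 - α
    rw [he, h0]; linarith
  have hne : S.Nonempty := ⟨M, hMmem⟩
  have hbdd : BddBelow S := ⟨-M, fun x hx => by
    by_contra h
    push_neg at h
    have hu : {ω | x < X ω} = Set.univ := by
      ext ω
      simp only [Set.mem_setOf_eq, Set.mem_univ, iff_true]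
      have := (abs_le.1 (hM ω)).1
      linarith
    have : ν {ω | x < X ω} < 1 - α := hx
    rw [hu, h1] at this
    linarith⟩
  have hlt : ∀ x : ℝ, x < q → 1 - α ≤ ν {ω | x < X ω} := by
    intro x hx
    by_contra h
    push_neg at h
    exact absurd (csInf_le hbdd h) (not_le.2 hx)
  have hgt : ∀ x : ℝ, q < x → ν {ω | x < X ω} < 1 - α := by
    intro x hx
    obtain ⟨s, hs, hsx⟩ := exists_lt_of_csInf_lt hne hx
    exact hSup s hs x hsx.le
  -- a.e. identification of the integrands
  have hae1 : ∀ᵐ x : ℝ, (if 1 - α ≤ ν {ω | x < X ω} then (1:ℝ) else 0)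
      = (Set.Iio q).indicator (fun _ => (1:ℝ)) x := by
    rw [ae_iff]
    refine measure_mono_null (fun x hx => ?_) (measure_singleton q)
    simp only [Set.mem_setOf_eq] at hx
    by_contra hxq
    rcases lt_or_gt_of_ne hxq with h | h
    · exact hx (by rw [if_pos (hlt x h), Set.indicator_of_mem (show x ∈ Set.Iio q from h)])
    · exact hx (by rw [if_neg (not_le.2 (hgt x h)), Set.indicator_of_notMem (by simpa using h.le)])
  have hae2 : ∀ᵐ x : ℝ, (if 1 - α ≤ ν {ω | x < X ω} then (1:ℝ) else 0) - 1
      = (Set.Ioi q).indicator (fun _ => (-1:ℝ)) x := by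
    rw [ae_iff]
    refine measure_mono_null (fun x hx => ?_) (measure_singleton q)
    simp only [Set.mem_setOf_eq] at hx
    by_contra hxq
    rcases lt_or_gt_of_ne hxq with h | h
    · exact hx (by rw [if_pos (hlt x h), Set.indicator_of_notMem (by simpa using h.le)]; ring)
    · exact hx (by rw [if_neg (not_le.2 (hgt x h)), Set.indicator_of_mem (show x ∈ Set.Ioi q from h)]; ring)
  have e1 : (∫ x in Set.Ioi (0:ℝ), (if 1 - α ≤ ν {ω | x < X ω} then (1:ℝ) else 0))
      = max q 0 := by
    rw [integral_congr_ae (ae_restrict_of_ae hae1), setIntegral_indicator measurableSet_Iio]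
    have : Set.Ioi (0:ℝ) ∩ Set.Iio q = Set.Ioo 0 q := by
      ext x; simp [and_comm]
    rw [this, setIntegral_const, Real.volume_real_Ioo, smul_eq_mul, mul_one]
    simp
  have e2 : (∫ x in Set.Iio (0:ℝ), ((if 1 - α ≤ ν {ω | x < X ω} then (1:ℝ) else 0) - 1))
      = min q 0 := by
    rw [integral_congr_ae (ae_restrict_of_ae hae2), setIntegral_indicator measurableSet_Ioi]
    have : Set.Iio (0:ℝ) ∩ Set.Ioi q = Set.Ioo q 0 := by
      ext x; simp [and_comm]
    rw [this, setIntegral_const, Real.volume_real_Ioo, smul_eq_mul]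
    rcases le_total q 0 with h | h
    · rw [max_eq_left (by linarith), min_eq_left h]; ring
    · rw [max_eq_right (by linarith), min_eq_right h]; ring
  rw [e1, e2]
  have hc : capQuantile ν X α = q := rfl
  rw [hc]
  have := max_add_min q 0
  simpa using this


end
end

section
/- Let ν be a continuous capacity on a measurable space (Ω, F), let X : Ω → ℝ be bounded measurable, and let α ∈ (0,1). Define h_α : [0,1] → [0,1] by h_α(β) = max((β − (1 − α))/α, 0). Then the Choquet integral of X with respect to the distorted capacity A ↦ h_α(ν(A)) equals the average of the ν-quantiles of X below level α; that is, ∫₀^∞ h_α(ν({X > x})) dx + ∫_{−∞}^0 (h_α(ν({X > x})) − 1) dx = (1/α) ∫₀^α q_ν(X, β) dβ. -/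
open MeasureTheory Filter Topology

noncomputable section

/-- the Choquet integral with respect to the distorted capacity
`h_α ∘ ν` equals the average of the ν-quantiles below level α
(Proposition `prop:quant`, second part). -/
theorem stmt18 {Ω : Type*} [F : MeasurableSpace Ω] (ν : Set Ω → ℝ)
    (hν : IsContinuousCapacity F ν) (X : Ω → ℝ) (hX : BddMeas F X)
    (α : ℝ) (hα0 : 0 < α) (hα1 : α < 1) :
    (∫ x in Set.Ioi (0:ℝ), max ((ν {ω | x < X ω} - (1 - α)) / α) 0) +
      (∫ x in Set.Iio (0:ℝ), (max ((ν {ω | x < X ω} - (1 - α)) / α) 0 - 1)) =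
    (1 / α) * ∫ β in (0:ℝ)..α, capQuantile ν X β := by
  classical
  obtain ⟨⟨hν0, hν1, hmono⟩, -, -⟩ := hν
  obtain ⟨hXm, M, hM⟩ := hX
  have hΩ : Nonempty Ω := by
    by_contra h
    rw [not_nonempty_iff] at h
    have : (Set.univ : Set Ω) = ∅ := Set.univ_eq_empty_iff.2 h
    rw [this, hν0] at hν1; norm_num at hν1
  obtain ⟨ω0⟩ := hΩ
  have hM0 : 0 ≤ M := le_trans (abs_nonneg _) (hM ω0)
  set G : ℝ → ℝ := fun x => ν {ω | x < X ω} with hGdef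
  have hmeasA : ∀ x : ℝ, MeasurableSet {ω | x < X ω} := fun x =>
    measurableSet_lt measurable_const hXm
  have hGanti : Antitone G := fun x y hxy =>
    hmono _ _ (hmeasA y) (hmeasA x) (fun ω hω => lt_of_le_of_lt hxy hω)
  have hGmeas : Measurable G := hGanti.measurable
  have hG0 : ∀ x, 0 ≤ G x := fun x => by
    have := hmono ∅ _ MeasurableSet.empty (hmeasA x) (Set.empty_subset _)
    rwa [hν0] at this
  have hG1 : ∀ x, G x ≤ 1 := fun x => by
    have := hmono _ Set.univ (hmeasA x) MeasurableSet.univ (Set.subset_univ _)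
    rwa [hν1] at this
  have hGhi : ∀ x, M ≤ x → G x = 0 := by
    intro x hx
    have he : {ω | x < X ω} = ∅ := by
      ext ω
      simp only [Set.mem_setOf_eq, Set.mem_empty_iff_false, iff_false, not_lt]
      exact le_trans (le_trans (le_abs_self _) (hM ω)) hx
    simp only [hGdef]; rw [he, hν0]
  have hGlo : ∀ x, x < -M → G x = 1 := by
    intro x hx
    have he : {ω | x < X ω} = Set.univ := by
      ext ω
      simp only [Set.mem_setOf_eq, Set.mem_univ, iff_true]
      have := neg_abs_le (X ω)
      have := hM ω
      linarith [abs_nonneg (X ω)]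
    simp only [hGdef]; rw [he, hν1]
  set a : ℝ := -(M+1) with hadef
  set b : ℝ := M+1 with hbdef
  have ha0 : a < 0 := by rw [hadef]; linarith
  have hb0 : 0 < b := by rw [hbdef]; linarith
  have haM : a < -M := by rw [hadef]; linarith
  have hMb : M < b := by rw [hbdef]; linarith
  set μ1 := volume.restrict (Set.Ioo a b) with hμ1
  set μ2 := volume.restrict (Set.Ioo (0:ℝ) α) with hμ2
  haveI : IsFiniteMeasure μ1 := ⟨by rw [hμ1, Measure.restrict_apply_univ]; exact measure_Ioo_lt_top⟩
  haveI : IsFiniteMeasure μ2 := ⟨by rw [hμ2, Measure.restrict_apply_univ]; exact measure_Ioo_lt_top⟩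
  set ψ : ℝ → ℝ → ℝ := fun x β => (if 1 - β < G x then (1:ℝ) else 0) - (if x < 0 then (1:ℝ) else 0) with hψdef
  set f : ℝ → ℝ := fun x => max ((G x - (1 - α)) / α) 0 with hfdef
  set φ : ℝ → ℝ := fun x => f x - (if x < 0 then (1:ℝ) else 0) with hφdef
  have hψmeas : Measurable (Function.uncurry ψ) := by
    simp only [hψdef, Function.uncurry]
    apply Measurable.sub
    · exact Measurable.ite
        (measurableSet_lt (measurable_const.sub measurable_snd) (hGmeas.comp measurable_fst))
        measurable_const measurable_const
    · exact Measurable.ite (measurableSet_lt measurable_fst measurable_const)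
        measurable_const measurable_const
  have hψbd : ∀ p : ℝ × ℝ, ‖Function.uncurry ψ p‖ ≤ 2 := by
    intro p
    simp only [hψdef, Function.uncurry, Real.norm_eq_abs]
    rw [abs_le]
    constructor <;> split_ifs <;> norm_num
  have hψint : Integrable (Function.uncurry ψ) (μ1.prod μ2) :=
    ⟨hψmeas.aestronglyMeasurable, HasFiniteIntegral.of_bounded (C := 2) (.of_forall hψbd)⟩
  -- the inner integral in β
  have hinner_beta : ∀ x : ℝ, ∫ β, ψ x β ∂μ2 = α * φ x := by
    intro x
    have hint1 : Integrable ((Set.Ioi (1 - G x)).indicator (fun _ => (1:ℝ))) μ2 :=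
      (integrable_const _).indicator measurableSet_Ioi
    have hcongr : ∫ β, ψ x β ∂μ2
        = ∫ β, ((Set.Ioi (1 - G x)).indicator (fun _ => (1:ℝ)) β - (if x < 0 then (1:ℝ) else 0)) ∂μ2 := by
      apply integral_congr_ae
      apply Filter.Eventually.of_forall
      intro β
      simp only [hψdef, Set.indicator_apply, Set.mem_Ioi, sub_lt_comm]
    rw [hcongr, integral_sub hint1 (integrable_const _)]
    rw [integral_indicator_const _ measurableSet_Ioi, integral_const, measureReal_def, measureReal_def]
    have hset : Set.Ioi (1 - G x) ∩ Set.Ioo 0 α = Set.Ioo (1 - G x) α := by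
      have ht : 0 ≤ 1 - G x := by linarith [hG1 x]
      ext y
      simp only [Set.mem_inter_iff, Set.mem_Ioi, Set.mem_Ioo]
      constructor
      · rintro ⟨h1', _, h2'⟩; exact ⟨h1', h2'⟩
      · rintro ⟨h1', h2'⟩; exact ⟨h1', lt_of_le_of_lt ht h1', h2'⟩
    rw [hμ2, Measure.restrict_apply measurableSet_Ioi, hset, Measure.restrict_apply_univ,
      Real.volume_Ioo, Real.volume_Ioo, ENNReal.toReal_ofReal']
    rw [show ((ENNReal.ofReal (α - 0)).toReal = α) by rw [sub_zero, ENNReal.toReal_ofReal hα0.le]]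
    have hmax : α * max ((G x - (1 - α)) / α) 0 = max (α - (1 - G x)) 0 := by
      rw [mul_max_of_nonneg _ _ hα0.le, mul_div_cancel₀ _ (ne_of_gt hα0), mul_zero]
      ring_nf
    simp only [hφdef, hfdef, smul_eq_mul, mul_one]
    rw [mul_sub, hmax]
  -- quantile machinery
  set cQ : ℝ → ℝ := fun β => sSup {x : ℝ | 1 - β < G x} with hcQdef
  set qQ : ℝ → ℝ := fun β => sInf {x : ℝ | G x < 1 - β} with hqQdef
  have hSmem_a : ∀ β : ℝ, 0 < β → a ∈ {x : ℝ | 1 - β < G x} := by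
    intro β hβ
    have := hGlo a haM
    simp only [Set.mem_setOf_eq, this]
    linarith
  have hSbdd : ∀ β : ℝ, β < 1 → BddAbove {x : ℝ | 1 - β < G x} := by
    intro β hβ
    refine ⟨M, fun x hx => ?_⟩
    by_contra hxM
    push_neg at hxM
    rw [Set.mem_setOf_eq, hGhi x hxM.le] at hx
    linarith
  have hTmem_M : ∀ β : ℝ, β < 1 → M ∈ {x : ℝ | G x < 1 - β} := by
    intro β hβ
    simp only [Set.mem_setOf_eq, hGhi M le_rfl]
    linarith
  have hTbdd : ∀ β : ℝ, 0 < β → BddBelow {x : ℝ | G x < 1 - β} := by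
    intro β hβ
    refine ⟨-M, fun x hx => ?_⟩
    by_contra hxM
    push_neg at hxM
    rw [Set.mem_setOf_eq, hGlo x hxM] at hx
    linarith
  have hcM : ∀ β : ℝ, 0 < β → β < 1 → a ≤ cQ β ∧ cQ β ≤ M := by
    intro β h1 h2
    constructor
    · exact le_csSup (hSbdd β h2) (hSmem_a β h1)
    · refine csSup_le ⟨a, hSmem_a β h1⟩ (fun x hx => ?_)
      by_contra hxM
      push_neg at hxM
      rw [Set.mem_setOf_eq, hGhi x hxM.le] at hx
      linarith
  have hcq : ∀ β : ℝ, 0 < β → β < 1 → cQ β ≤ qQ β := by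
    intro β h1 h2
    refine csSup_le ⟨a, hSmem_a β h1⟩ (fun s hs => le_csInf ⟨M, hTmem_M β h2⟩ (fun t ht => ?_))
    by_contra hst
    push_neg at hst
    rw [Set.mem_setOf_eq] at hs ht
    have := hGanti hst.le
    linarith
  -- the inner integral in x equals cQ β
  have hinner_x : ∀ β : ℝ, 0 < β → β < 1 → ∫ x, ψ x β ∂μ1 = cQ β := by
    intro β h1 h2
    set S := {x : ℝ | 1 - β < G x} with hSdef
    have hSmeas : MeasurableSet S := measurableSet_lt measurable_const hGmeas
    have hc := hcM β h1 h2
    have hcongr : ∫ x, ψ x β ∂μ1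
        = ∫ x, (S.indicator (fun _ => (1:ℝ)) x - (Set.Iio (0:ℝ)).indicator (fun _ => (1:ℝ)) x) ∂μ1 := by
      apply integral_congr_ae
      apply Filter.Eventually.of_forall
      intro x
      simp only [hψdef, Set.indicator_apply, Set.mem_Iio, hSdef, Set.mem_setOf_eq]
    rw [hcongr, integral_sub ((integrable_const _).indicator hSmeas)
        ((integrable_const _).indicator measurableSet_Iio),
      integral_indicator_const _ hSmeas, integral_indicator_const _ measurableSet_Iio]
    have hvol1 : μ1 S = ENNReal.ofReal (cQ β - a) := by
      rw [hμ1, Measure.restrict_apply hSmeas]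
      have hsub1 : Set.Ioo a (cQ β) ⊆ S ∩ Set.Ioo a b := by
        rintro x ⟨hx1, hx2⟩
        refine ⟨?_, hx1, lt_of_lt_of_le hx2 (le_trans hc.2 hMb.le)⟩
        obtain ⟨s, hs, hxs⟩ := exists_lt_of_lt_csSup ⟨a, hSmem_a β h1⟩ hx2
        rw [Set.mem_setOf_eq] at hs ⊢
        exact lt_of_lt_of_le hs (hGanti hxs.le)
      have hsub2 : S ∩ Set.Ioo a b ⊆ Set.Ioc a (cQ β) := by
        rintro x ⟨hx1, hx2, -⟩
        exact ⟨hx2, le_csSup (hSbdd β h2) hx1⟩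
      have h1' := measure_mono (μ := volume) hsub1
      have h2' := measure_mono (μ := volume) hsub2
      rw [Real.volume_Ioo] at h1'
      rw [Real.volume_Ioc] at h2'
      exact le_antisymm h2' h1'
    have hvol2 : μ1 (Set.Iio 0) = ENNReal.ofReal (-a) := by
      rw [hμ1, Measure.restrict_apply measurableSet_Iio]
      have : Set.Iio (0:ℝ) ∩ Set.Ioo a b = Set.Ioo a 0 := by
        ext y
        simp only [Set.mem_inter_iff, Set.mem_Iio, Set.mem_Ioo]
        constructor
        · rintro ⟨h1', h2', -⟩; exact ⟨h2', h1'⟩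
        · rintro ⟨h1', h2'⟩; exact ⟨h2', h1', lt_trans h2' hb0⟩
      rw [this, Real.volume_Ioo]
      norm_num
    rw [measureReal_def, measureReal_def, hvol1, hvol2, ENNReal.toReal_ofReal (by linarith [hc.1]),
      ENNReal.toReal_ofReal (by linarith : (0:ℝ) ≤ -a)]
    simp only [smul_eq_mul, mul_one]
    ring
  -- the bad set is countable, hence null
  set B : Set ℝ := {β | β ∈ Set.Ioo (0:ℝ) α ∧ cQ β < qQ β} with hBdef
  have hBcount : B.Countable := by
    have hch : ∀ β : B, ∃ r : ℚ, cQ β.1 < (r:ℝ) ∧ (r:ℝ) < qQ β.1 := fun β =>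
      exists_rat_btwn β.2.2
    choose Fr hF1 hF2 using hch
    have hGr : ∀ β : B, G (Fr β) = 1 - β.1 := by
      intro β
      obtain ⟨⟨hβ0, hβα⟩, -⟩ := β.2
      have hβ1 : β.1 < 1 := lt_trans hβα hα1
      have hle : G ((Fr β : ℚ) : ℝ) ≤ 1 - β.1 := by
        by_contra hgt
        push_neg at hgt
        have : ((Fr β : ℚ) : ℝ) ≤ cQ β.1 := le_csSup (hSbdd β.1 hβ1) hgt
        linarith [hF1 β]
      have hge : 1 - β.1 ≤ G ((Fr β : ℚ) : ℝ) := by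
        by_contra hlt
        push_neg at hlt
        have : qQ β.1 ≤ ((Fr β : ℚ) : ℝ) := csInf_le (hTbdd β.1 hβ0) hlt
        linarith [hF2 β]
      linarith
    have hinj : Function.Injective Fr := by
      intro β1 β2 hE
      have h1 := hGr β1
      have h2 := hGr β2
      rw [hE] at h1
      have : β1.1 = β2.1 := by linarith
      exact Subtype.ext this
    exact Set.countable_coe_iff.mp (hinj.countable)
  have hBnull : volume B = 0 := hBcount.measure_zero _
  -- identify the x-section integral with the quantile a.e.
  have hae : (fun β => ∫ x, ψ x β ∂μ1) =ᵐ[μ2] (fun β => capQuantile ν X β) := by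
    have h1 : ∀ᵐ β ∂μ2, β ∉ B := ae_restrict_of_ae (measure_eq_zero_iff_ae_notMem.mp hBnull)
    have h2 : ∀ᵐ β ∂μ2, β ∈ Set.Ioo (0:ℝ) α := hμ2 ▸ ae_restrict_mem measurableSet_Ioo
    filter_upwards [h1, h2] with β hβ1 hβ2
    have hβ0 := hβ2.1
    have hβlt1 : β < 1 := lt_trans hβ2.2 hα1
    have hq : capQuantile ν X β = qQ β := rfl
    show ∫ x, ψ x β ∂μ1 = capQuantile ν X β
    rw [hinner_x β hβ0 hβlt1, hq]
    rcases eq_or_lt_of_le (hcq β hβ0 hβlt1) with h | h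
    · exact h
    · exact absurd ⟨hβ2, h⟩ hβ1
  -- bounding and support of φ
  have hfmeas : Measurable f := by
    rw [hfdef]
    exact ((hGmeas.sub measurable_const).div_const α).max measurable_const
  have hφmeas : Measurable φ := by
    rw [hφdef]
    exact hfmeas.sub (Measurable.ite measurableSet_Iio measurable_const measurable_const)
  have hφbd : ∀ x, ‖φ x‖ ≤ 2 := by
    intro x
    have hf0 : 0 ≤ f x := by rw [hfdef]; exact le_max_right _ _
    have hf1 : f x ≤ 1 := by
      rw [hfdef]
      apply max_le _ zero_le_one
      rw [div_le_one hα0]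
      linarith [hG1 x]
    simp only [hφdef, Real.norm_eq_abs]
    rw [abs_le]
    constructor <;> split_ifs <;> linarith
  have hφzero : ∀ x : ℝ, x ∉ Set.Ico (-M) M → φ x = 0 := by
    intro x hx
    rw [Set.mem_Ico, not_and_or, not_le, not_lt] at hx
    rcases hx with hx | hx
    · have hg := hGlo x hx
      have hx0 : x < 0 := by linarith
      rw [hφdef, hfdef]
      simp only [hg, if_pos hx0]
      rw [show (1 - (1 - α)) / α = 1 by field_simp; ring]
      norm_num
    · have hg := hGhi x hx
      have hx0 : ¬ x < 0 := by push_neg; linarith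
      rw [hφdef, hfdef]
      simp only [hg, if_neg hx0]
      rw [max_eq_right (by apply div_nonpos_of_nonpos_of_nonneg <;> linarith)]
      norm_num
  have hφint : Integrable φ volume := by
    haveI : IsFiniteMeasure (volume.restrict (Set.Ico (-M) M)) :=
      ⟨by rw [Measure.restrict_apply_univ]; exact measure_Ico_lt_top⟩
    have h1 : Integrable ((Set.Ico (-M) M).indicator φ) volume := by
      rw [integrable_indicator_iff measurableSet_Ico]
      exact ⟨hφmeas.aestronglyMeasurable, HasFiniteIntegral.of_bounded (C := 2) (.of_forall hφbd)⟩
    apply h1.congr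
    apply Filter.Eventually.of_forall
    intro x
    by_cases hx : x ∈ Set.Ico (-M) M
    · simp [Set.indicator_apply, hx]
    · simp [Set.indicator_apply, hx, hφzero x hx]
  -- reduce the LHS integrals to the box
  have e1 : ∫ x in Set.Ioi (0:ℝ), f x = ∫ x in Set.Ioo 0 b, f x := by
    apply setIntegral_eq_of_subset_of_forall_diff_eq_zero measurableSet_Ioi (fun x hx => hx.1)
    intro x hx
    obtain ⟨hx1, hx2⟩ := hx
    rw [Set.mem_Ioo, not_and_or, not_lt, not_lt] at hx2
    have hbx : b ≤ x := by
      rcases hx2 with h | h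
      · rw [Set.mem_Ioi] at hx1; linarith
      · exact h
    have := hφzero x (by rw [Set.mem_Ico, not_and_or]; right; push_neg; linarith)
    rw [hφdef] at this
    have hx0 : ¬ x < 0 := by push_neg; rw [Set.mem_Ioi] at hx1; linarith
    simp only [if_neg hx0, sub_zero] at this
    exact this
  have e2 : ∫ x in Set.Iio (0:ℝ), (f x - 1) = ∫ x in Set.Ioo a 0, (f x - 1) := by
    apply setIntegral_eq_of_subset_of_forall_diff_eq_zero measurableSet_Iio (fun x hx => hx.2)
    intro x hx
    obtain ⟨hx1, hx2⟩ := hx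
    rw [Set.mem_Iio] at hx1
    rw [Set.mem_Ioo, not_and_or, not_lt, not_lt] at hx2
    have hax : x ≤ a := by
      rcases hx2 with h | h
      · exact h
      · linarith
    have := hφzero x (by rw [Set.mem_Ico, not_and_or]; left; push_neg; linarith)
    rw [hφdef] at this
    simp only [if_pos hx1] at this
    linarith
  have e3 : ∫ x in Set.Ioo (0:ℝ) b, f x = ∫ x in Set.Ioo (0:ℝ) b, φ x := by
    apply setIntegral_congr_fun measurableSet_Ioo
    intro x hx
    have hx0 : ¬ x < 0 := by push_neg; exact hx.1.le
    rw [hφdef]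
    simp only [if_neg hx0, sub_zero]
  have e4 : ∫ x in Set.Ioo a 0, (f x - 1) = ∫ x in Set.Ioo a 0, φ x := by
    apply setIntegral_congr_fun measurableSet_Ioo
    intro x hx
    rw [hφdef]
    simp only [if_pos hx.2]
  have e5 : (∫ x in Set.Ioo a 0, φ x) + (∫ x in Set.Ioo (0:ℝ) b, φ x)
      = ∫ x in Set.Ioo a 0 ∪ Set.Ioo 0 b, φ x := by
    symm
    refine setIntegral_union ?_ measurableSet_Ioo (hφint.integrableOn) (hφint.integrableOn)
    apply Set.disjoint_left.mpr
    rintro x ⟨-, h0⟩ ⟨h0', -⟩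
    linarith
  have e6 : ∫ x in Set.Ioo a 0 ∪ Set.Ioo 0 b, φ x = ∫ x in Set.Ioo a b, φ x := by
    apply setIntegral_congr_set
    have hU : Set.Ioo a 0 ∪ Set.Ioo 0 b = Set.Ioo a b \ {0} := by
      ext y
      simp only [Set.mem_union, Set.mem_Ioo, Set.mem_diff, Set.mem_singleton_iff]
      constructor
      · rintro (⟨h1, h2⟩ | ⟨h1, h2⟩)
        · exact ⟨⟨h1, lt_trans h2 hb0⟩, by linarith⟩
        · exact ⟨⟨lt_trans ha0 h1, h2⟩, by linarith⟩
      · rintro ⟨⟨h1, h2⟩, h3⟩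
        rcases lt_or_gt_of_ne h3 with h | h
        · exact Or.inl ⟨h1, h⟩
        · exact Or.inr ⟨h, h2⟩
    rw [hU]
    have h0 : volume (Set.Ioo a b ∩ {(0:ℝ)}) = 0 :=
      measure_mono_null Set.inter_subset_right (measure_singleton 0)
    exact diff_ae_eq_self.2 h0
  have e7 : ∫ x in Set.Ioo a b, φ x = (1/α) * ∫ x, (∫ β, ψ x β ∂μ2) ∂μ1 := by
    rw [← integral_const_mul]
    apply integral_congr_ae
    apply Filter.Eventually.of_forall
    intro x
    show φ x = 1/α * ∫ β, ψ x β ∂μ2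
    rw [hinner_beta x]
    field_simp
  have e8 : ∫ x, (∫ β, ψ x β ∂μ2) ∂μ1 = ∫ β, (∫ x, ψ x β ∂μ1) ∂μ2 :=
    integral_integral_swap hψint
  have e9 : ∫ β, (∫ x, ψ x β ∂μ1) ∂μ2 = ∫ β, capQuantile ν X β ∂μ2 := integral_congr_ae hae
  have e10 : ∫ β, capQuantile ν X β ∂μ2 = ∫ β in (0:ℝ)..α, capQuantile ν X β := by
    rw [intervalIntegral.integral_of_le hα0.le, hμ2]
    exact setIntegral_congr_set Ioo_ae_eq_Ioc
  show (∫ x in Set.Ioi (0:ℝ), f x) + (∫ x in Set.Iio (0:ℝ), (f x - 1))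
      = (1 / α) * ∫ β in (0:ℝ)..α, capQuantile ν X β
  rw [e1, e3, e2, e4, add_comm, e5, e6, e7, e8, e9, e10]
end
end

section
/- Let μ₁ and μ₂ be two distinct probability measures on a measurable space (Ω, F). For a probability measure μ, a bounded measurable X : Ω → ℝ, and α ∈ (0,1), write q_μ(X, α) = inf { x ∈ ℝ : μ({X > x}) < 1 − α }, and define q_D(X, α) = (1/2)·q_{μ₁}(X, α) + (1/2)·q_{μ₂}(X, α). Then: (a) for all bounded measurable X, Y : Ω → ℝ, all λ ∈ [0,1], and all α ∈ (0,1]: ∫₀^α q_D(λX + (1−λ)Y, β) dβ ≥ λ ∫₀^α q_D(X, β) dβ + (1−λ) ∫₀^α q_D(Y, β) dβ; (b) there is no probability measure μ on (Ω, F) such that q_μ(X, α) ≥ q_D(X, α) for all bounded measurable X and all α ∈ (0,1). -/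
open MeasureTheory Filter Topology

noncomputable section

section Stmt19Aux
open Set
set_option linter.unusedSectionVars false

variable {Ω : Type*} [F : MeasurableSpace Ω] (μ : Measure Ω) [IsProbabilityMeasure μ]
  (X : Ω → ℝ) (M : ℝ)

lemma compl_toReal {A : Set Ω} (hA : MeasurableSet A) :
    (μ Aᶜ).toReal = 1 - (μ A).toReal := by
  have h := measure_add_measure_compl (μ := μ) hA
  rw [measure_univ] at h
  have h2 := congrArg ENNReal.toReal h
  rw [ENNReal.toReal_add (measure_ne_top μ A) (measure_ne_top μ Aᶜ)] at h2
  simp at h2; linarith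

lemma le_compl_toReal (hX : Measurable X) (x : ℝ) :
    (μ {ω | X ω ≤ x}).toReal = 1 - (μ {ω | x < X ω}).toReal := by
  have : {ω | X ω ≤ x} = {ω | x < X ω}ᶜ := by ext ω; simp [not_lt]
  rw [this]
  exact compl_toReal μ (hX measurableSet_Ioi : MeasurableSet {ω | x < X ω})

lemma capQ_lt_iff_aux (hX : Measurable X) {β : ℝ} (hβ0 : 0 < β) (y : ℝ)
    (h : β < (μ {ω | X ω < y}).toReal) :
    ∃ x, x < y ∧ (μ {ω | x < X ω}).toReal < 1 - β := by
  set A : ℕ → Set Ω := fun n => {ω | X ω ≤ y - 1/(n+1)} with hA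
  have hAmono : Monotone A := by
    intro m n hmn ω hω
    simp only [hA, Set.mem_setOf_eq] at hω ⊢
    have : (1:ℝ)/(n+1) ≤ 1/(m+1) := by
      apply one_div_le_one_div_of_le (by positivity)
      have : (m:ℝ) ≤ n := Nat.cast_le.2 hmn
      linarith
    linarith
  have hAU : (⋃ n, A n) = {ω | X ω < y} := by
    ext ω
    simp only [Set.mem_iUnion, hA, Set.mem_setOf_eq]
    constructor
    · rintro ⟨n, hn⟩; have : (0:ℝ) < 1/(n+1) := by positivity
      linarith
    · intro hω
      obtain ⟨n, hn⟩ := exists_nat_one_div_lt (sub_pos.2 hω)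
      exact ⟨n, by push_cast at hn ⊢; linarith⟩
  have hmeas : ∀ n, MeasurableSet (A n) := fun n => hX measurableSet_Iic
  have hsup : μ (⋃ n, A n) = ⨆ n, μ (A n) :=
    hAmono.directed_le.measure_iUnion
  rw [hAU] at hsup
  have h2 : ENNReal.ofReal β < μ {ω | X ω < y} := by
    rw [ENNReal.ofReal_lt_iff_lt_toReal hβ0.le (measure_ne_top μ _)]; exact h
  rw [hsup, lt_iSup_iff] at h2
  obtain ⟨n, hn⟩ := h2
  have hpos : (0:ℝ) < 1/(n+1) := by positivity
  refine ⟨y - 1/(n+1), by linarith, ?_⟩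
  have hβlt : β < (μ (A n)).toReal := by
    have := (ENNReal.ofReal_lt_iff_lt_toReal hβ0.le (measure_ne_top μ (A n))).1 hn
    exact this
  have := le_compl_toReal μ X hX (y - 1/(n+1))
  simp only [hA] at hβlt
  rw [this] at hβlt
  linarith

lemma capQ_mem' (hM : ∀ ω, |X ω| ≤ M) {β : ℝ} (hβ : β < 1) :
    M ∈ {x : ℝ | (μ {ω | x < X ω}).toReal < 1 - β} := by
  have h : {ω | M < X ω} = ∅ := by
    ext ω; simp only [Set.mem_setOf_eq, Set.mem_empty_iff_false, iff_false, not_lt]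
    exact (abs_le.1 (hM ω)).2
  simp [Set.mem_setOf_eq, h]; linarith

lemma capQ_subset_Ici (hM : ∀ ω, |X ω| ≤ M) {β : ℝ} (hβ : 0 ≤ β) :
    {x : ℝ | (μ {ω | x < X ω}).toReal < 1 - β} ⊆ Set.Ici (-M) := by
  intro x hx
  by_contra hxM
  simp only [Set.mem_Ici, not_le] at hxM
  have hset : {ω | x < X ω} = Set.univ := by
    ext ω; simp only [Set.mem_setOf_eq, Set.mem_univ, iff_true]
    exact lt_of_lt_of_le hxM (neg_le_of_abs_le (hM ω))
  simp only [Set.mem_setOf_eq, hset, measure_univ, ENNReal.toReal_one] at hx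
  linarith

lemma capQ_bddBelow (hM : ∀ ω, |X ω| ≤ M) {β : ℝ} (hβ : 0 ≤ β) :
    BddBelow {x : ℝ | (μ {ω | x < X ω}).toReal < 1 - β} :=
  ⟨-M, capQ_subset_Ici μ X M hM hβ⟩

lemma capQ_nonempty (hM : ∀ ω, |X ω| ≤ M) {β : ℝ} (hβ : β < 1) :
    {x : ℝ | (μ {ω | x < X ω}).toReal < 1 - β}.Nonempty :=
  ⟨M, capQ_mem' μ X M hM hβ⟩

lemma capQ_def (β : ℝ) :
    capQuantile (fun A => (μ A).toReal) X β
      = sInf {x : ℝ | (μ {ω | x < X ω}).toReal < 1 - β} := rfl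

lemma capQ_le (hM : ∀ ω, |X ω| ≤ M) {β : ℝ} (hβ0 : 0 ≤ β) (hβ : β < 1) :
    capQuantile (fun A => (μ A).toReal) X β ≤ M :=
  csInf_le (capQ_bddBelow μ X M hM hβ0) (capQ_mem' μ X M hM hβ)

lemma capQ_ge (hM : ∀ ω, |X ω| ≤ M) {β : ℝ} (hβ0 : 0 ≤ β) (hβ : β < 1) :
    -M ≤ capQuantile (fun A => (μ A).toReal) X β :=
  le_csInf (capQ_nonempty μ X M hM hβ) (fun _ hx => capQ_subset_Ici μ X M hM hβ0 hx)

lemma capQ_mono (hM : ∀ ω, |X ω| ≤ M) {β β' : ℝ} (hβ0 : 0 ≤ β) (hβ' : β' < 1)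
    (h : β ≤ β') :
    capQuantile (fun A => (μ A).toReal) X β ≤ capQuantile (fun A => (μ A).toReal) X β' := by
  rw [capQ_def, capQ_def]
  apply csInf_le_csInf (capQ_bddBelow μ X M hM hβ0) (capQ_nonempty μ X M hM hβ')
  intro x hx
  simp only [Set.mem_setOf_eq] at hx ⊢
  linarith

lemma capQ_lt_iff (hX : Measurable X) (hM : ∀ ω, |X ω| ≤ M) {β : ℝ} (hβ0 : 0 < β)
    (hβ1 : β < 1) (y : ℝ) :
    capQuantile (fun A => (μ A).toReal) X β < y ↔ β < (μ {ω | X ω < y}).toReal := by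
  rw [capQ_def]
  rw [csInf_lt_iff (capQ_bddBelow μ X M hM hβ0.le) (capQ_nonempty μ X M hM hβ1)]
  constructor
  · rintro ⟨x, hx, hxy⟩
    simp only [Set.mem_setOf_eq] at hx
    have h1 := le_compl_toReal μ X hX x
    have h2 : (μ {ω | X ω ≤ x}).toReal ≤ (μ {ω | X ω < y}).toReal := by
      apply ENNReal.toReal_mono (measure_ne_top μ _)
      exact measure_mono (fun ω hω => lt_of_le_of_lt hω hxy)
    linarith
  · intro h
    obtain ⟨x, hxy, hx⟩ := capQ_lt_iff_aux μ X hX hβ0 y h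
    exact ⟨x, hx, hxy⟩

lemma capQ_sublevel (hX : Measurable X) (hM : ∀ ω, |X ω| ≤ M) (y : ℝ) :
    {β : ℝ | β ∈ Set.Ioo (0:ℝ) 1 ∧ capQuantile (fun A => (μ A).toReal) X β < y}
      = Set.Ioo 0 ((μ {ω | X ω < y}).toReal) := by
  have hle : (μ {ω | X ω < y}).toReal ≤ 1 := by
    rw [← ENNReal.toReal_one]
    exact ENNReal.toReal_mono ENNReal.one_ne_top (prob_le_one)
  ext β
  simp only [Set.mem_setOf_eq, Set.mem_Ioo]
  constructor
  · rintro ⟨⟨h0, h1⟩, hq⟩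
    exact ⟨h0, (capQ_lt_iff μ X M hX hM h0 h1 y).1 hq⟩
  · rintro ⟨h0, hβ⟩
    have h1 : β < 1 := lt_of_lt_of_le hβ hle
    exact ⟨⟨h0, h1⟩, (capQ_lt_iff μ X M hX hM h0 h1 y).2 hβ⟩

lemma capQ_indicator_measurable (hX : Measurable X) (hM : ∀ ω, |X ω| ≤ M) :
    Measurable ((Set.Ioo (0:ℝ) 1).indicator (capQuantile (fun A => (μ A).toReal) X)) := by
  apply measurable_of_Iio
  intro y
  have key : ((Set.Ioo (0:ℝ) 1).indicator (capQuantile (fun A => (μ A).toReal) X)) ⁻¹' Set.Iio y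
      = (Set.Ioo 0 ((μ {ω | X ω < y}).toReal))
        ∪ (if 0 < y then (Set.Ioo (0:ℝ) 1)ᶜ else ∅) := by
    ext β
    have hsub := capQ_sublevel μ X M hX hM y
    have hsub' : (β ∈ Set.Ioo (0:ℝ) 1 ∧ capQuantile (fun A => (μ A).toReal) X β < y)
        ↔ β ∈ Set.Ioo 0 ((μ {ω | X ω < y}).toReal) := by
      constructor
      · intro h; rw [← hsub]; exact h
      · intro h; have := hsub ▸ h; exact this
    by_cases hβ : β ∈ Set.Ioo (0:ℝ) 1
    · simp only [Set.mem_preimage, Set.indicator_of_mem hβ, Set.mem_Iio, Set.mem_union,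
        Set.mem_ite_empty_right, Set.mem_compl_iff]
      constructor
      · intro h; exact Or.inl (hsub'.1 ⟨hβ, h⟩)
      · rintro (h | ⟨-, h⟩)
        · exact (hsub'.2 h).2
        · exact absurd hβ h
    · simp only [Set.mem_preimage, Set.indicator_of_notMem hβ, Set.mem_Iio, Set.mem_union,
        Set.mem_ite_empty_right, Set.mem_compl_iff]
      constructor
      · intro h; exact Or.inr ⟨h, hβ⟩
      · rintro (h | ⟨h, -⟩)
        · exact absurd ((hsub'.2 h).1) hβ
        · exact h
  rw [key]
  by_cases hy : 0 < y <;> simp [hy] <;> measurability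

lemma capQ_aemeasurable (hX : Measurable X) (hM : ∀ ω, |X ω| ≤ M) :
    AEMeasurable (capQuantile (fun A => (μ A).toReal) X)
      (volume.restrict (Set.Ioo (0:ℝ) 1)) := by
  refine ⟨(Set.Ioo (0:ℝ) 1).indicator (capQuantile (fun A => (μ A).toReal) X),
    capQ_indicator_measurable μ X M hX hM, ?_⟩
  filter_upwards [ae_restrict_mem measurableSet_Ioo] with β hβ
  rw [Set.indicator_of_mem hβ]

lemma capQ_integrableOn (hX : Measurable X) (hM : ∀ ω, |X ω| ≤ M) (hM0 : 0 ≤ M) :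
    IntegrableOn (capQuantile (fun A => (μ A).toReal) X) (Set.Ioo (0:ℝ) 1) volume := by
  apply Integrable.mono' (integrable_const M)
  · exact (capQ_aemeasurable μ X M hX hM).aestronglyMeasurable
  · filter_upwards [ae_restrict_mem measurableSet_Ioo] with β hβ
    rw [Real.norm_eq_abs, abs_le]
    exact ⟨capQ_ge μ X M hM hβ.1.le hβ.2, capQ_le μ X M hM hβ.1.le hβ.2⟩

lemma X_max_integrable (hX : Measurable X) (hM : ∀ ω, |X ω| ≤ M) (t : ℝ) :
    Integrable (fun ω => max (t - X ω) 0) μ := by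
  apply Integrable.mono' (integrable_const (|t| + M))
  · exact ((measurable_const.sub hX).max measurable_const).aestronglyMeasurable
  · filter_upwards with ω
    rw [Real.norm_eq_abs, abs_of_nonneg (le_max_right _ _)]
    have h1 := abs_le.1 (hM ω)
    have h2 := abs_le.1 (le_refl |t|)
    simp only [max_le_iff]
    constructor
    · have := neg_abs_le t; linarith
    · have : 0 ≤ M := le_trans (abs_nonneg _) (hM ω)
      have := abs_nonneg t; linarith

lemma capQ_max_integrable (hX : Measurable X) (hM : ∀ ω, |X ω| ≤ M) (t : ℝ) :
    IntegrableOn (fun β => max (t - capQuantile (fun A => (μ A).toReal) X β) 0)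
      (Set.Ioo (0:ℝ) 1) volume := by
  apply Integrable.mono' (integrable_const (|t| + M))
  · exact (((aemeasurable_const.sub (capQ_aemeasurable μ X M hX hM)).max
      aemeasurable_const)).aestronglyMeasurable
  · filter_upwards [ae_restrict_mem measurableSet_Ioo] with β hβ
    rw [Real.norm_eq_abs, abs_of_nonneg (le_max_right _ _)]
    have h1 := capQ_ge μ X M hM hβ.1.le hβ.2
    have h2 := le_abs_self t
    simp only [max_le_iff]
    refine ⟨by linarith, ?_⟩
    have : 0 ≤ M := by linarith [capQ_le μ X M hM hβ.1.le hβ.2]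
    have := abs_nonneg t; linarith

lemma capQ_layercake (hX : Measurable X) (hM : ∀ ω, |X ω| ≤ M) (t : ℝ) :
    ∫ ω, max (t - X ω) 0 ∂μ
      = ∫ β in Set.Ioo (0:ℝ) 1, max (t - capQuantile (fun A => (μ A).toReal) X β) 0 := by
  rw [Integrable.integral_eq_integral_meas_lt (X_max_integrable μ X M hX hM t)
    (Eventually.of_forall fun ω => le_max_right _ _)]
  rw [Integrable.integral_eq_integral_meas_lt (capQ_max_integrable μ X M hX hM t)
    (Eventually.of_forall fun β => le_max_right _ _)]
  apply setIntegral_congr_fun measurableSet_Ioi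
  intro s hs
  simp only [Set.mem_Ioi] at hs
  dsimp only
  have e1 : {a : Ω | s < max (t - X a) 0} = {ω | X ω < t - s} := by
    ext ω
    simp only [Set.mem_setOf_eq, lt_max_iff]
    constructor
    · rintro (h | h) <;> [linarith; linarith]
    · intro h; exact Or.inl (by linarith)
  have e2 : {β : ℝ | s < max (t - capQuantile (fun A => (μ A).toReal) X β) 0}
      = {β : ℝ | capQuantile (fun A => (μ A).toReal) X β < t - s} := by
    ext β
    simp only [Set.mem_setOf_eq, lt_max_iff]
    constructor
    · rintro (h | h) <;> [linarith; linarith]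
    · intro h; exact Or.inl (by linarith)
  rw [e1, e2, measureReal_def, measureReal_def, Measure.restrict_apply' measurableSet_Ioo]
  have e3 : {β : ℝ | capQuantile (fun A => (μ A).toReal) X β < t - s} ∩ Set.Ioo 0 1
      = Set.Ioo 0 ((μ {ω | X ω < t - s}).toReal) := by
    rw [← capQ_sublevel μ X M hX hM (t - s)]
    ext β; simp only [Set.mem_inter_iff, Set.mem_setOf_eq]; tauto
  rw [e3, Real.volume_Ioo]
  rw [ENNReal.toReal_ofReal_eq_iff.2 (by simp [ENNReal.toReal_nonneg])]
  ring

lemma ioo_inter (α : ℝ) (hα1 : α ≤ 1) : Set.Ioo (0:ℝ) α ∩ Set.Ioo (0:ℝ) 1 = Set.Ioo 0 α := by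
  apply Set.inter_eq_left.2
  exact Set.Ioo_subset_Ioo le_rfl hα1

lemma restrict_Ioo_integral (α : ℝ) (hα1 : α ≤ 1) (f : ℝ → ℝ) :
    ∫ β in Set.Ioo (0:ℝ) 1, (Set.Ioo (0:ℝ) α).indicator f β = ∫ β in Set.Ioo (0:ℝ) α, f β := by
  rw [integral_indicator measurableSet_Ioo, Measure.restrict_restrict measurableSet_Ioo,
    ioo_inter α hα1]

lemma exists_tstar (hX : Measurable X) (hM : ∀ ω, |X ω| ≤ M) {α : ℝ} (hα0 : 0 < α)
    (hα1 : α ≤ 1) :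
    ∃ t : ℝ,
      (μ {ω | X ω < t}).toReal ≤ α ∧
      α ≤ (μ {ω | X ω ≤ t}).toReal ∧
      ∫ ω, max (t - X ω) 0 ∂μ
        = α * t - ∫ β in Set.Ioo (0:ℝ) α, capQuantile (fun A => (μ A).toReal) X β := by
  have hM0 : 0 ≤ M := by
    have hne : Nonempty Ω := by
      by_contra h
      rw [not_nonempty_iff] at h
      have h1 : μ Set.univ = 1 := measure_univ
      rw [Set.univ_eq_empty_iff.2 h, measure_empty] at h1
      exact zero_ne_one h1
    obtain ⟨ω⟩ := hne
    exact le_trans (abs_nonneg _) (hM ω)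
  rcases eq_or_lt_of_le hα1 with hα | hα
  · -- α = 1
    refine ⟨M + 1, ?_, ?_, ?_⟩
    · have : μ {ω | X ω < M + 1} ≤ 1 := prob_le_one
      calc (μ {ω | X ω < M + 1}).toReal ≤ (1 : ENNReal).toReal :=
            ENNReal.toReal_mono ENNReal.one_ne_top this
        _ = 1 := by simp
        _ = α := hα.symm
    · have : {ω | X ω ≤ M + 1} = Set.univ := by
        ext ω; simp only [Set.mem_setOf_eq, Set.mem_univ, iff_true]
        have := (abs_le.1 (hM ω)).2; linarith
      rw [this, measure_univ, hα]; simp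
    · rw [capQ_layercake μ X M hX hM]
      have hcg : ∀ β ∈ Set.Ioo (0:ℝ) 1,
          max (M + 1 - capQuantile (fun A => (μ A).toReal) X β) 0
            = (Set.Ioo (0:ℝ) α).indicator
                (fun β => M + 1 - capQuantile (fun A => (μ A).toReal) X β) β := by
        intro β hβ
        have h1 := capQ_le μ X M hM hβ.1.le hβ.2
        rw [max_eq_left (by linarith)]
        rw [Set.indicator_of_mem (by rw [hα]; exact hβ)]
      rw [setIntegral_congr_fun measurableSet_Ioo hcg, restrict_Ioo_integral α hα1]
      have hint : IntegrableOn (capQuantile (fun A => (μ A).toReal) X) (Set.Ioo (0:ℝ) α)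
          volume := (capQ_integrableOn μ X M hX hM hM0).mono_set
        (Set.Ioo_subset_Ioo le_rfl hα1)
      rw [integral_sub (integrable_const _) hint]
      rw [setIntegral_const, measureReal_def, Real.volume_Ioo, sub_zero, ENNReal.toReal_ofReal hα0.le,
        smul_eq_mul]
  · -- α < 1
    set t := capQuantile (fun A => (μ A).toReal) X α with ht
    refine ⟨t, ?_, ?_, ?_⟩
    · by_contra h
      push_neg at h
      have := (capQ_lt_iff μ X M hX hM hα0 hα t).2 h
      exact lt_irrefl t this
    · -- α ≤ μ {X ≤ t}
      have hS : (μ {ω | t < X ω}).toReal ≤ 1 - α := by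
        set B : ℕ → Set Ω := fun n => {ω | t + 1/(n+1) < X ω} with hB
        have hBU : (⋃ n, B n) = {ω | t < X ω} := by
          ext ω
          simp only [Set.mem_iUnion, hB, Set.mem_setOf_eq]
          constructor
          · rintro ⟨n, hn⟩
            have hpos : (0:ℝ) < 1/(n+1) := by positivity
            linarith
          · intro hω
            obtain ⟨n, hn⟩ := exists_nat_one_div_lt (sub_pos.2 hω)
            exact ⟨n, by linarith⟩
        have hBle : ∀ n, μ (B n) ≤ ENNReal.ofReal (1 - α) := by
          intro n
          have hpos : (0:ℝ) < 1/(n+1) := by positivity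
          have hlt : t < t + 1/(n+1) := by linarith
          rw [ht, capQ_def] at hlt
          obtain ⟨y, hy, hylt⟩ := (csInf_lt_iff (capQ_bddBelow μ X M hM hα0.le)
            (capQ_nonempty μ X M hM hα)).1 hlt
          simp only [Set.mem_setOf_eq] at hy
          have hsub : B n ⊆ {ω | y < X ω} := fun ω hω => lt_trans hylt hω
          have h1 : (μ (B n)).toReal ≤ (μ {ω | y < X ω}).toReal :=
            ENNReal.toReal_mono (measure_ne_top μ _) (measure_mono hsub)
          rw [ENNReal.le_ofReal_iff_toReal_le (measure_ne_top μ _) (by linarith)]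
          linarith
        have hdir : Monotone B := by
          intro m n hmn ω hω
          simp only [hB, Set.mem_setOf_eq] at hω ⊢
          have h1 : (1:ℝ)/(n+1) ≤ 1/(m+1) := by
            apply one_div_le_one_div_of_le (by positivity)
            have : (m:ℝ) ≤ n := Nat.cast_le.2 hmn
            linarith
          linarith
        have hsup : μ (⋃ n, B n) = ⨆ n, μ (B n) :=
          hdir.directed_le.measure_iUnion
        have : μ {ω | t < X ω} ≤ ENNReal.ofReal (1 - α) := by
          rw [← hBU, hsup]
          exact iSup_le hBle
        calc (μ {ω | t < X ω}).toReal ≤ (ENNReal.ofReal (1 - α)).toReal :=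
              ENNReal.toReal_mono ENNReal.ofReal_ne_top this
          _ = 1 - α := ENNReal.toReal_ofReal (by linarith)
      have := le_compl_toReal μ X hX t
      linarith
    · rw [capQ_layercake μ X M hX hM]
      have hcg : ∀ β ∈ Set.Ioo (0:ℝ) 1,
          max (t - capQuantile (fun A => (μ A).toReal) X β) 0
            = (Set.Ioo (0:ℝ) α).indicator
                (fun β => t - capQuantile (fun A => (μ A).toReal) X β) β := by
        intro β hβ
        by_cases hcase : β < α
        · have h1 : capQuantile (fun A => (μ A).toReal) X β ≤ t :=
            capQ_mono μ X M hM hβ.1.le hα hcase.le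
          rw [max_eq_left (by linarith), Set.indicator_of_mem (Set.mem_Ioo.2 ⟨hβ.1, hcase⟩)]
        · push_neg at hcase
          have h1 : t ≤ capQuantile (fun A => (μ A).toReal) X β :=
            capQ_mono μ X M hM hα0.le hβ.2 hcase
          rw [max_eq_right (by linarith),
            Set.indicator_of_notMem (fun hmem => absurd hmem.2 (not_lt.2 hcase))]
      rw [setIntegral_congr_fun measurableSet_Ioo hcg, restrict_Ioo_integral α hα1]
      have hint : IntegrableOn (capQuantile (fun A => (μ A).toReal) X) (Set.Ioo (0:ℝ) α)
          volume := (capQ_integrableOn μ X M hX hM hM0).mono_set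
        (Set.Ioo_subset_Ioo le_rfl hα1)
      rw [integral_sub (integrable_const _) hint]
      rw [setIntegral_const, measureReal_def, Real.volume_Ioo, sub_zero, ENNReal.toReal_ofReal hα0.le,
        smul_eq_mul]

lemma bdd_meas_integrable (W : Ω → ℝ) (hW : Measurable W) (C : ℝ) (h : ∀ ω, |W ω| ≤ C) :
    Integrable W μ := by
  apply Integrable.mono' (integrable_const C) hW.aestronglyMeasurable
  filter_upwards with ω
  rw [Real.norm_eq_abs]; exact h ω

lemma capQ_core (X Y : Ω → ℝ) (hX : Measurable X) (hY : Measurable Y)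
    (MX MY : ℝ) (hMX : ∀ ω, |X ω| ≤ MX) (hMY : ∀ ω, |Y ω| ≤ MY)
    {l α : ℝ} (hl0 : 0 ≤ l) (hl1 : l ≤ 1) (hα0 : 0 < α) (hα1 : α ≤ 1) :
    l * (∫ β in Set.Ioo (0:ℝ) α, capQuantile (fun A => (μ A).toReal) X β)
      + (1 - l) * (∫ β in Set.Ioo (0:ℝ) α, capQuantile (fun A => (μ A).toReal) Y β)
    ≤ ∫ β in Set.Ioo (0:ℝ) α, capQuantile (fun A => (μ A).toReal)
        (fun ω => l * X ω + (1 - l) * Y ω) β := by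
  set Z : Ω → ℝ := fun ω => l * X ω + (1 - l) * Y ω with hZdef
  have hZ : Measurable Z := (hX.const_mul l).add (hY.const_mul (1 - l))
  set MZ : ℝ := l * MX + (1 - l) * MY with hMZdef
  have hMZ : ∀ ω, |Z ω| ≤ MZ := by
    intro ω
    calc |Z ω| ≤ |l * X ω| + |(1 - l) * Y ω| := abs_add_le _ _
      _ = l * |X ω| + (1 - l) * |Y ω| := by
          rw [abs_mul, abs_mul, abs_of_nonneg hl0,
            abs_of_nonneg (show (0:ℝ) ≤ 1 - l by linarith)]
      _ ≤ l * MX + (1 - l) * MY := by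
          have h1 := mul_le_mul_of_nonneg_left (hMX ω) hl0
          have h2 := mul_le_mul_of_nonneg_left (hMY ω) (by linarith : (0:ℝ) ≤ 1 - l)
          linarith
  obtain ⟨t, htP2, htP3, htEQ⟩ := exists_tstar μ Z MZ hZ hMZ hα0 hα1
  obtain ⟨tX, _, _, htXEQ⟩ := exists_tstar μ X MX hX hMX hα0 hα1
  obtain ⟨tY, _, _, htYEQ⟩ := exists_tstar μ Y MY hY hMY hα0 hα1
  have hmlt : MeasurableSet {ω | Z ω < t} := hZ measurableSet_Iio
  have hmeq : MeasurableSet {ω | Z ω = t} := hZ (measurableSet_singleton t)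
  have hsplit : (μ {ω | Z ω ≤ t}).toReal
      = (μ {ω | Z ω < t}).toReal + (μ {ω | Z ω = t}).toReal := by
    have hU : {ω | Z ω ≤ t} = {ω | Z ω < t} ∪ {ω | Z ω = t} := by
      ext ω; simp only [Set.mem_setOf_eq, Set.mem_union]; exact le_iff_lt_or_eq
    have hdisj : Disjoint {ω | Z ω < t} {ω | Z ω = t} := by
      rw [Set.disjoint_left]
      intro ω h1 h2
      simp only [Set.mem_setOf_eq] at h1 h2
      exact absurd h2 (ne_of_lt h1)
    rw [hU, measure_union hdisj hmeq,
      ENNReal.toReal_add (measure_ne_top μ _) (measure_ne_top μ _)]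
  set c : ℝ := if (μ {ω | Z ω = t}).toReal = 0 then 0
    else (α - (μ {ω | Z ω < t}).toReal) / (μ {ω | Z ω = t}).toReal with hcdef
  have hc0 : 0 ≤ c := by
    rw [hcdef]
    split_ifs with h
    · exact le_rfl
    · exact div_nonneg (by linarith) ENNReal.toReal_nonneg
  have hc1 : c ≤ 1 := by
    rw [hcdef]
    split_ifs with h
    · norm_num
    · rw [div_le_one (lt_of_le_of_ne ENNReal.toReal_nonneg (Ne.symm h))]
      linarith
  set φ : Ω → ℝ := fun ω => Set.indicator {ω | Z ω < t} (fun _ => (1:ℝ)) ω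
    + c * Set.indicator {ω | Z ω = t} (fun _ => (1:ℝ)) ω with hφdef
  have hφval : ∀ ω, (Z ω < t → φ ω = 1) ∧ (Z ω = t → φ ω = c) ∧ (t < Z ω → φ ω = 0) := by
    intro ω
    refine ⟨fun h => ?_, fun h => ?_, fun h => ?_⟩
    · rw [hφdef]
      simp only [Set.indicator_apply, Set.mem_setOf_eq, h, if_true, ne_of_lt h, if_false,
        mul_zero, add_zero]
    · rw [hφdef]
      simp only [Set.indicator_apply, Set.mem_setOf_eq, h, lt_irrefl, if_false, if_true,
        mul_one, zero_add]
    · rw [hφdef]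
      simp only [Set.indicator_apply, Set.mem_setOf_eq, not_lt.2 h.le, ne_of_gt h]
      simp [not_lt.2 h.le, (ne_of_gt h).symm]
  have hφ01 : ∀ ω, 0 ≤ φ ω ∧ φ ω ≤ 1 := by
    intro ω
    rcases lt_trichotomy (Z ω) t with h | h | h
    · rw [(hφval ω).1 h]; exact ⟨zero_le_one, le_refl 1⟩
    · rw [(hφval ω).2.1 h]; exact ⟨hc0, hc1⟩
    · rw [(hφval ω).2.2 h]; exact ⟨le_refl 0, zero_le_one⟩
  have hφmeas : Measurable φ := by
    apply Measurable.add
    · exact (measurable_const.indicator hmlt)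
    · exact (measurable_const.indicator hmeq).const_mul c
  have hφabs : ∀ ω, |φ ω| ≤ 1 := fun ω =>
    abs_le.2 ⟨by linarith [(hφ01 ω).1], (hφ01 ω).2⟩
  have hφint : Integrable φ μ := bdd_meas_integrable μ φ hφmeas 1 hφabs
  have hintφ : ∫ ω, φ ω ∂μ = α := by
    rw [hφdef]
    rw [integral_add]
    · rw [integral_indicator_const (1:ℝ) hmlt]
      rw [integral_const_mul, integral_indicator_const (1:ℝ) hmeq]
      simp only [smul_eq_mul, mul_one, measureReal_def]
      rw [hcdef]
      split_ifs with h
      · rw [h] at hsplit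
        linarith
      · rw [div_mul_cancel₀ _ h]
        ring
    · apply bdd_meas_integrable μ _ (measurable_const.indicator hmlt) 1
      intro ω
      by_cases h : ω ∈ {ω | Z ω < t}
      · simp [Set.indicator_of_mem h]
      · simp [Set.indicator_of_notMem h]
    · apply bdd_meas_integrable μ _ ((measurable_const.indicator hmeq).const_mul c) 1
      intro ω
      by_cases h : ω ∈ {ω | Z ω = t}
      · simp only [Set.indicator_of_mem h, mul_one]
        rw [abs_of_nonneg hc0]; exact hc1
      · simp [Set.indicator_of_notMem h]
  have id1 : ∀ ω, (t - Z ω) * φ ω = max (t - Z ω) 0 := by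
    intro ω
    rcases lt_trichotomy (Z ω) t with h | h | h
    · rw [(hφval ω).1 h, mul_one, max_eq_left (by linarith)]
    · rw [(hφval ω).2.1 h, h]; simp
    · rw [(hφval ω).2.2 h, mul_zero, max_eq_right (by linarith)]
  have bdX : ∀ ω, (tX - X ω) * φ ω ≤ max (tX - X ω) 0 := by
    intro ω
    rcases le_or_gt (X ω) tX with h | h
    · rw [max_eq_left (by linarith)]
      nlinarith [(hφ01 ω).1, (hφ01 ω).2]
    · rw [max_eq_right (by linarith)]
      nlinarith [(hφ01 ω).1, (hφ01 ω).2]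
  have bdY : ∀ ω, (tY - Y ω) * φ ω ≤ max (tY - Y ω) 0 := by
    intro ω
    rcases le_or_gt (Y ω) tY with h | h
    · rw [max_eq_left (by linarith)]
      nlinarith [(hφ01 ω).1, (hφ01 ω).2]
    · rw [max_eq_right (by linarith)]
      nlinarith [(hφ01 ω).1, (hφ01 ω).2]
  have prodbd : ∀ (W : Ω → ℝ) (MW : ℝ), (∀ ω, |W ω| ≤ MW) → ∀ ω, |W ω * φ ω| ≤ MW := by
    intro W MW hW ω
    rw [abs_mul]
    calc |W ω| * |φ ω| ≤ |W ω| * 1 := mul_le_mul_of_nonneg_left (hφabs ω) (abs_nonneg _)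
      _ = |W ω| := mul_one _
      _ ≤ MW := hW ω
  have intXφ : Integrable (fun ω => X ω * φ ω) μ :=
    bdd_meas_integrable μ _ (hX.mul hφmeas) MX (prodbd X MX hMX)
  have intYφ : Integrable (fun ω => Y ω * φ ω) μ :=
    bdd_meas_integrable μ _ (hY.mul hφmeas) MY (prodbd Y MY hMY)
  have intTXφ : Integrable (fun ω => (tX - X ω) * φ ω) μ := by
    have hfun : (fun ω => (tX - X ω) * φ ω) = fun ω => tX * φ ω - X ω * φ ω :=
      funext fun ω => by ring
    rw [hfun]
    exact (hφint.const_mul tX).sub intXφ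
  have intTYφ : Integrable (fun ω => (tY - Y ω) * φ ω) μ := by
    have hfun : (fun ω => (tY - Y ω) * φ ω) = fun ω => tY * φ ω - Y ω * φ ω :=
      funext fun ω => by ring
    rw [hfun]
    exact (hφint.const_mul tY).sub intYφ
  have intZφ : Integrable (fun ω => Z ω * φ ω) μ :=
    bdd_meas_integrable μ _ (hZ.mul hφmeas) MZ (prodbd Z MZ hMZ)
  have intTZφ : Integrable (fun ω => (t - Z ω) * φ ω) μ := by
    have hfun : (fun ω => (t - Z ω) * φ ω) = fun ω => t * φ ω - Z ω * φ ω :=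
      funext fun ω => by ring
    rw [hfun]
    exact (hφint.const_mul t).sub intZφ
  have EZ : ∫ ω, Z ω * φ ω ∂μ
      = ∫ β in Set.Ioo (0:ℝ) α, capQuantile (fun A => (μ A).toReal) Z β := by
    have hfun : (fun ω => Z ω * φ ω) = fun ω => t * φ ω - (t - Z ω) * φ ω :=
      funext fun ω => by ring
    rw [hfun, integral_sub (hφint.const_mul t) intTZφ, integral_const_mul, hintφ]
    have hid : (fun ω => (t - Z ω) * φ ω) = fun ω => max (t - Z ω) 0 := funext id1
    rw [hid, htEQ]
    ring
  have EX : ∫ β in Set.Ioo (0:ℝ) α, capQuantile (fun A => (μ A).toReal) X β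
      ≤ ∫ ω, X ω * φ ω ∂μ := by
    have hfun : (fun ω => X ω * φ ω) = fun ω => tX * φ ω - (tX - X ω) * φ ω :=
      funext fun ω => by ring
    rw [hfun, integral_sub (hφint.const_mul tX) intTXφ, integral_const_mul, hintφ]
    have hle : ∫ ω, (tX - X ω) * φ ω ∂μ ≤ ∫ ω, max (tX - X ω) 0 ∂μ :=
      integral_mono intTXφ (X_max_integrable μ X MX hX hMX tX) bdX
    rw [htXEQ] at hle
    linarith
  have EY : ∫ β in Set.Ioo (0:ℝ) α, capQuantile (fun A => (μ A).toReal) Y β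
      ≤ ∫ ω, Y ω * φ ω ∂μ := by
    have hfun : (fun ω => Y ω * φ ω) = fun ω => tY * φ ω - (tY - Y ω) * φ ω :=
      funext fun ω => by ring
    rw [hfun, integral_sub (hφint.const_mul tY) intTYφ, integral_const_mul, hintφ]
    have hle : ∫ ω, (tY - Y ω) * φ ω ∂μ ≤ ∫ ω, max (tY - Y ω) 0 ∂μ :=
      integral_mono intTYφ (X_max_integrable μ Y MY hY hMY tY) bdY
    rw [htYEQ] at hle
    linarith
  have Elin : ∫ ω, Z ω * φ ω ∂μ
      = l * ∫ ω, X ω * φ ω ∂μ + (1 - l) * ∫ ω, Y ω * φ ω ∂μ := by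
    have hfun : (fun ω => Z ω * φ ω) = fun ω => l * (X ω * φ ω) + (1 - l) * (Y ω * φ ω) := by
      funext ω
      simp only [hZdef]
      ring
    rw [hfun, integral_add (intXφ.const_mul l) (intYφ.const_mul (1 - l)),
      integral_const_mul, integral_const_mul]
  have h1 := mul_le_mul_of_nonneg_left EX hl0
  have h2 := mul_le_mul_of_nonneg_left EY (show (0:ℝ) ≤ 1 - l by linarith)
  linarith

lemma ind_bdd {A : Set Ω} (hA : MeasurableSet A) :
    Measurable (A.indicator fun _ => (1:ℝ)) ∧ ∀ ω, |A.indicator (fun _ => (1:ℝ)) ω| ≤ 1 := by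
  refine ⟨measurable_const.indicator hA, fun ω => ?_⟩
  by_cases h : ω ∈ A
  · simp [Set.indicator_of_mem h]
  · simp [Set.indicator_of_notMem h]

lemma capQ_indicator {A : Set Ω} (hA : MeasurableSet A) {α : ℝ} (hα0 : 0 < α) (hα1 : α < 1) :
    capQuantile (fun B => (μ B).toReal) (A.indicator fun _ => (1:ℝ)) α
      = if (μ A).toReal < 1 - α then 0 else 1 := by
  have e1 : ∀ x : ℝ, x < 0 → {ω | x < A.indicator (fun _ => (1:ℝ)) ω} = Set.univ := by
    intro x hx
    ext ω
    simp only [Set.mem_setOf_eq, Set.mem_univ, iff_true]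
    by_cases h : ω ∈ A
    · rw [Set.indicator_of_mem h]; linarith
    · rw [Set.indicator_of_notMem h]; linarith
  have e2 : ∀ x : ℝ, 0 ≤ x → x < 1 → {ω | x < A.indicator (fun _ => (1:ℝ)) ω} = A := by
    intro x hx0 hx1
    ext ω
    simp only [Set.mem_setOf_eq]
    by_cases h : ω ∈ A
    · rw [Set.indicator_of_mem h]; simp [h]; linarith
    · rw [Set.indicator_of_notMem h]; simp [h]; linarith
  have e3 : ∀ x : ℝ, 1 ≤ x → {ω | x < A.indicator (fun _ => (1:ℝ)) ω} = ∅ := by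
    intro x hx
    ext ω
    simp only [Set.mem_setOf_eq, Set.mem_empty_iff_false, iff_false, not_lt]
    by_cases h : ω ∈ A
    · rw [Set.indicator_of_mem h]; linarith
    · rw [Set.indicator_of_notMem h]; linarith
  have hTdef : capQuantile (fun B => (μ B).toReal) (A.indicator fun _ => (1:ℝ)) α
      = sInf {x : ℝ | (μ {ω | x < A.indicator (fun _ => (1:ℝ)) ω}).toReal < 1 - α} := rfl
  split_ifs with h
  · rw [hTdef]
    have hT : {x : ℝ | (μ {ω | x < A.indicator (fun _ => (1:ℝ)) ω}).toReal < 1 - α}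
        = Set.Ici 0 := by
      ext x
      simp only [Set.mem_setOf_eq, Set.mem_Ici]
      constructor
      · intro hx
        by_contra hx0
        push_neg at hx0
        rw [e1 x hx0, measure_univ] at hx
        simp at hx
        linarith
      · intro hx0
        rcases lt_or_ge x 1 with hx1 | hx1
        · rw [e2 x hx0 hx1]; exact h
        · rw [e3 x hx1]; simp; linarith
    rw [hT, csInf_Ici]
  · rw [hTdef]
    have hT : {x : ℝ | (μ {ω | x < A.indicator (fun _ => (1:ℝ)) ω}).toReal < 1 - α}
        = Set.Ici 1 := by
      push_neg at h
      ext x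
      simp only [Set.mem_setOf_eq, Set.mem_Ici]
      constructor
      · intro hx
        by_contra hx1
        push_neg at hx1
        rcases lt_or_ge x 0 with hx0 | hx0
        · rw [e1 x hx0, measure_univ] at hx
          simp at hx
          linarith
        · rw [e2 x hx0 hx1] at hx
          linarith
      · intro hx1
        rw [e3 x hx1]; simp; linarith
    rw [hT, csInf_Ici]

lemma bkey (ρ₁ ρ₂ ρ : Measure Ω) [IsProbabilityMeasure ρ₁] [IsProbabilityMeasure ρ₂]
    [IsProbabilityMeasure ρ] {B : Set Ω} (hB : MeasurableSet B)
    (h : ∀ α : ℝ, 0 < α → α < 1 →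
      ((1:ℝ)/2) * capQuantile (fun A => (ρ₁ A).toReal) (B.indicator fun _ => (1:ℝ)) α
        + ((1:ℝ)/2) * capQuantile (fun A => (ρ₂ A).toReal) (B.indicator fun _ => (1:ℝ)) α
      ≤ capQuantile (fun A => (ρ A).toReal) (B.indicator fun _ => (1:ℝ)) α)
    (hlt : (ρ₁ B).toReal < (ρ₂ B).toReal) : (ρ₂ B).toReal ≤ (ρ B).toReal := by
  set a := (ρ₁ B).toReal
  set b := (ρ₂ B).toReal
  set c := (ρ B).toReal
  by_contra hc
  push_neg at hc
  have ha0 : 0 ≤ a := ENNReal.toReal_nonneg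
  have hb1 : b ≤ 1 := by
    rw [← ENNReal.toReal_one]
    exact ENNReal.toReal_mono ENNReal.one_ne_top prob_le_one
  set t := max ((a + b)/2) ((c + b)/2) with htdef
  have hat : a < t := lt_of_lt_of_le (by linarith) (le_max_left _ _)
  have hct : c < t := lt_of_lt_of_le (by linarith) (le_max_right _ _)
  have htb : t < b := by
    apply max_lt <;> linarith
  have ht0 : 0 < t := by linarith
  have ht1 : t < 1 := by linarith
  have hα0 : 0 < 1 - t := by linarith
  have hα1 : 1 - t < 1 := by linarith
  have key := h (1 - t) hα0 hα1
  rw [capQ_indicator ρ₁ hB hα0 hα1, capQ_indicator ρ₂ hB hα0 hα1,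
    capQ_indicator ρ hB hα0 hα1] at key
  have e : 1 - (1 - t) = t := by ring
  rw [e] at key
  rw [if_pos hat, if_neg (by linarith : ¬ b < t), if_pos hct] at key
  linarith


end Stmt19Aux

/-- the quantile-average act-to-distribution mapping of two
distinct probability measures is concave but not ambiguity averse
(Example `ex:counter2`). -/
theorem stmt19 {Ω : Type*} [F : MeasurableSpace Ω] (μ₁ μ₂ : Measure Ω)
    (h₁ : IsProbabilityMeasure μ₁) (h₂ : IsProbabilityMeasure μ₂)
    (hne : ∃ A : Set Ω, MeasurableSet A ∧ μ₁ A ≠ μ₂ A) :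
    (∀ X Y : Ω → ℝ, BddMeas F X → BddMeas F Y → ∀ l : ℝ, 0 ≤ l → l ≤ 1 →
      ∀ α : ℝ, 0 < α → α ≤ 1 →
        l * (∫ β in (0:ℝ)..α,
              ((1:ℝ)/2) * capQuantile (fun A => (μ₁ A).toReal) X β +
                ((1:ℝ)/2) * capQuantile (fun A => (μ₂ A).toReal) X β) +
          (1 - l) * (∫ β in (0:ℝ)..α,
              ((1:ℝ)/2) * capQuantile (fun A => (μ₁ A).toReal) Y β +
                ((1:ℝ)/2) * capQuantile (fun A => (μ₂ A).toReal) Y β) ≤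
        ∫ β in (0:ℝ)..α,
          ((1:ℝ)/2) * capQuantile (fun A => (μ₁ A).toReal)
              (fun ω => l * X ω + (1 - l) * Y ω) β +
            ((1:ℝ)/2) * capQuantile (fun A => (μ₂ A).toReal)
              (fun ω => l * X ω + (1 - l) * Y ω) β) ∧
    ¬ (∃ μ : Measure Ω, IsProbabilityMeasure μ ∧
        ∀ X : Ω → ℝ, BddMeas F X → ∀ α : ℝ, 0 < α → α < 1 →
          ((1:ℝ)/2) * capQuantile (fun A => (μ₁ A).toReal) X α +
              ((1:ℝ)/2) * capQuantile (fun A => (μ₂ A).toReal) X α ≤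
            capQuantile (fun A => (μ A).toReal) X α) := by
  haveI := h₁
  haveI := h₂
  constructor
  · intro X Y hbX hbY l hl0 hl1 α hα0 hα1
    obtain ⟨hXm, MX, hMX⟩ : Measurable X ∧ ∃ M : ℝ, ∀ ω, |X ω| ≤ M := hbX
    obtain ⟨hYm, MY, hMY⟩ : Measurable Y ∧ ∃ M : ℝ, ∀ ω, |Y ω| ≤ M := hbY
    have hMX' : ∀ ω, |X ω| ≤ |MX| := fun ω => le_trans (hMX ω) (le_abs_self MX)
    have hMY' : ∀ ω, |Y ω| ≤ |MY| := fun ω => le_trans (hMY ω) (le_abs_self MY)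
    have hZm : Measurable (fun ω => l * X ω + (1 - l) * Y ω) :=
      (hXm.const_mul l).add (hYm.const_mul (1 - l))
    have hMZ : ∀ ω, |l * X ω + (1 - l) * Y ω| ≤ |MX| + |MY| := by
      intro ω
      have h1 := hMX' ω
      have h2 := hMY' ω
      have h3 := abs_nonneg (X ω)
      have h4 := abs_nonneg (Y ω)
      calc |l * X ω + (1 - l) * Y ω| ≤ |l * X ω| + |(1 - l) * Y ω| := abs_add_le _ _
        _ = l * |X ω| + (1 - l) * |Y ω| := by
            rw [abs_mul, abs_mul, abs_of_nonneg hl0,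
              abs_of_nonneg (show (0:ℝ) ≤ 1 - l by linarith)]
        _ ≤ |MX| + |MY| := by nlinarith
    have conv : ∀ (W : Ω → ℝ), Measurable W → ∀ MW : ℝ, (∀ ω, |W ω| ≤ MW) →
        (∫ β in (0:ℝ)..α,
            ((1:ℝ)/2) * capQuantile (fun A => (μ₁ A).toReal) W β +
              ((1:ℝ)/2) * capQuantile (fun A => (μ₂ A).toReal) W β)
          = ((1:ℝ)/2) * (∫ β in Set.Ioo (0:ℝ) α, capQuantile (fun A => (μ₁ A).toReal) W β)
            + ((1:ℝ)/2) * (∫ β in Set.Ioo (0:ℝ) α, capQuantile (fun A => (μ₂ A).toReal) W β) := by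
      intro W hWm MW hMW
      have hMW' : ∀ ω, |W ω| ≤ |MW| := fun ω => le_trans (hMW ω) (le_abs_self MW)
      have i1 : IntegrableOn (capQuantile (fun A => (μ₁ A).toReal) W) (Set.Ioo (0:ℝ) α)
          volume := (capQ_integrableOn μ₁ W |MW| hWm hMW' (abs_nonneg MW)).mono_set
        (Set.Ioo_subset_Ioo le_rfl hα1)
      have i2 : IntegrableOn (capQuantile (fun A => (μ₂ A).toReal) W) (Set.Ioo (0:ℝ) α)
          volume := (capQ_integrableOn μ₂ W |MW| hWm hMW' (abs_nonneg MW)).mono_set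
        (Set.Ioo_subset_Ioo le_rfl hα1)
      rw [intervalIntegral.integral_of_le hα0.le, integral_Ioc_eq_integral_Ioo]
      rw [integral_add (i1.const_mul _) (i2.const_mul _), integral_const_mul, integral_const_mul]
    rw [conv X hXm MX hMX, conv Y hYm MY hMY,
      conv (fun ω => l * X ω + (1 - l) * Y ω) hZm (|MX| + |MY|) hMZ]
    have c1 := capQ_core μ₁ X Y hXm hYm |MX| |MY| hMX' hMY' hl0 hl1 hα0 hα1
    have c2 := capQ_core μ₂ X Y hXm hYm |MX| |MY| hMX' hMY' hl0 hl1 hα0 hα1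
    set IX1 := ∫ β in Set.Ioo (0:ℝ) α, capQuantile (fun A => (μ₁ A).toReal) X β
    set IX2 := ∫ β in Set.Ioo (0:ℝ) α, capQuantile (fun A => (μ₂ A).toReal) X β
    set IY1 := ∫ β in Set.Ioo (0:ℝ) α, capQuantile (fun A => (μ₁ A).toReal) Y β
    set IY2 := ∫ β in Set.Ioo (0:ℝ) α, capQuantile (fun A => (μ₂ A).toReal) Y β
    set IZ1 := ∫ β in Set.Ioo (0:ℝ) α, capQuantile (fun A => (μ₁ A).toReal)
      (fun ω => l * X ω + (1 - l) * Y ω) β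
    set IZ2 := ∫ β in Set.Ioo (0:ℝ) α, capQuantile (fun A => (μ₂ A).toReal)
      (fun ω => l * X ω + (1 - l) * Y ω) β
    have e : l * ((1:ℝ)/2 * IX1 + (1:ℝ)/2 * IX2) + (1 - l) * ((1:ℝ)/2 * IY1 + (1:ℝ)/2 * IY2)
        = (1:ℝ)/2 * (l * IX1 + (1 - l) * IY1) + (1:ℝ)/2 * (l * IX2 + (1 - l) * IY2) := by
      ring
    linarith [c1, c2, e]
  · rintro ⟨μ, hμ, hcontr⟩
    haveI := hμ
    obtain ⟨A, hA, hneA⟩ := hne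
    have h12 : ∀ (B : Set Ω), MeasurableSet B → ∀ α : ℝ, 0 < α → α < 1 →
        ((1:ℝ)/2) * capQuantile (fun A => (μ₁ A).toReal) (B.indicator fun _ => (1:ℝ)) α
          + ((1:ℝ)/2) * capQuantile (fun A => (μ₂ A).toReal) (B.indicator fun _ => (1:ℝ)) α
        ≤ capQuantile (fun A => (μ A).toReal) (B.indicator fun _ => (1:ℝ)) α := by
      intro B hB α hα0 hα1
      have hbdd : BddMeas F (B.indicator fun _ => (1:ℝ)) :=
        ⟨(ind_bdd hB).1, 1, (ind_bdd hB).2⟩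
      exact hcontr (B.indicator fun _ => (1:ℝ)) hbdd α hα0 hα1
    have h21 : ∀ (B : Set Ω), MeasurableSet B → ∀ α : ℝ, 0 < α → α < 1 →
        ((1:ℝ)/2) * capQuantile (fun A => (μ₂ A).toReal) (B.indicator fun _ => (1:ℝ)) α
          + ((1:ℝ)/2) * capQuantile (fun A => (μ₁ A).toReal) (B.indicator fun _ => (1:ℝ)) α
        ≤ capQuantile (fun A => (μ A).toReal) (B.indicator fun _ => (1:ℝ)) α := by
      intro B hB α hα0 hα1
      linarith [h12 B hB α hα0 hα1]
    have hAc : MeasurableSet Aᶜ := hA.compl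
    have hne' : (μ₁ A).toReal ≠ (μ₂ A).toReal := by
      intro h
      exact hneA ((ENNReal.toReal_eq_toReal_iff' (measure_ne_top μ₁ A) (measure_ne_top μ₂ A)).1 h)
    rcases hne'.lt_or_gt with hlt | hlt
    · have k1 := bkey μ₁ μ₂ μ hA (h12 A hA) hlt
      have hcompl : (μ₂ Aᶜ).toReal < (μ₁ Aᶜ).toReal := by
        rw [compl_toReal μ₂ hA, compl_toReal μ₁ hA]; linarith
      have k2 := bkey μ₂ μ₁ μ hAc (h21 Aᶜ hAc) hcompl
      rw [compl_toReal μ₁ hA, compl_toReal μ hA] at k2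
      linarith
    · have k1 := bkey μ₂ μ₁ μ hA (h21 A hA) hlt
      have hcompl : (μ₁ Aᶜ).toReal < (μ₂ Aᶜ).toReal := by
        rw [compl_toReal μ₂ hA, compl_toReal μ₁ hA]; linarith
      have k2 := bkey μ₁ μ₂ μ hAc (h12 Aᶜ hAc) hcompl
      rw [compl_toReal μ₂ hA, compl_toReal μ hA] at k2
      linarith


end
end
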